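/- arXiv:1109.5287 — 6 statements merged into one kernel-verified Lean document; each statement's English description precedes it below -/
import Mathlib

section
/- Let X be a random vector in ℝⁿ with a log-concave probability density f. Then log(‖f‖^{−1/n}) ≤ h(X)/n ≤ 1 + log(‖f‖^{−1/n}); equivalently, −log ‖f‖ ≤ h(X) ≤ n − log ‖f‖. -/
open MeasureTheory ProbabilityTheory Real
open scoped Pointwise ENNReal

noncomputable def ent {n : ℕ} (f : EuclideanSpace ℝ (Fin n) → ℝ) : ℝ :=
  -∫ x, f x * Real.log (f x)

noncomputable def densSup {n : ℕ} (f : EuclideanSpace ℝ (Fin n) → ℝ) : ℝ :=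
  (essSup (fun x => ENNReal.ofReal (f x)) volume).toReal

def HasDensity {Ω : Type*} [MeasurableSpace Ω] (P : Measure Ω) {n : ℕ}
    (X : Ω → EuclideanSpace ℝ (Fin n)) (f : EuclideanSpace ℝ (Fin n) → ℝ) : Prop :=
  Measure.map X P = volume.withDensity (fun x => ENNReal.ofReal (f x))

def ConvexForm {n : ℕ} (f : EuclideanSpace ℝ (Fin n) → ℝ) (β : ℝ) : Prop :=
  ∃ (S : Set (EuclideanSpace ℝ (Fin n))) (V : EuclideanSpace ℝ (Fin n) → ℝ),
    IsOpen S ∧ Convex ℝ S ∧ ConvexOn ℝ S V ∧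
    (∀ x ∈ S, 0 < V x) ∧ (∀ x ∈ S, f x = V x ^ (-β)) ∧ (∀ x ∉ S, f x = 0)

def LogConcaveDensity {n : ℕ} (f : EuclideanSpace ℝ (Fin n) → ℝ) : Prop :=
  (∀ x, 0 ≤ f x) ∧
  ∀ x y : EuclideanSpace ℝ (Fin n), ∀ t : ℝ, 0 < t → t < 1 →
    f x ^ t * f y ^ (1 - t) ≤ f (t • x + (1 - t) • y)

def KConcave {n : ℕ} (μ : Measure (EuclideanSpace ℝ (Fin n))) (κ : ℝ) : Prop :=
  ∀ A B : Set (EuclideanSpace ℝ (Fin n)), MeasurableSet A → MeasurableSet B →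
    0 < μ A → 0 < μ B → ∀ t : ℝ, 0 < t → t < 1 →
      (t * (μ A).toReal ^ κ + (1 - t) * (μ B).toReal ^ κ) ^ (1/κ) ≤
        (μ (t • A + (1 - t) • B)).toReal

def IsConvexBody {n : ℕ} (A : Set (EuclideanSpace ℝ (Fin n))) : Prop :=
  Convex ℝ A ∧ IsCompact A ∧ (interior A).Nonempty

def IsUniformOn {Ω : Type*} [MeasurableSpace Ω] (P : Measure Ω) {n : ℕ}
    (X : Ω → EuclideanSpace ℝ (Fin n)) (A : Set (EuclideanSpace ℝ (Fin n))) : Prop :=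
  Measure.map X P = (volume A)⁻¹ • volume.restrict A

section Aux

open Filter
open scoped Topology

variable {n : ℕ}

private lemma map_affine' {n : ℕ} {r : ℝ} (hr : r ≠ 0) (c : EuclideanSpace ℝ (Fin n)) :
    Measure.map (fun x => r • x + c) (volume : Measure (EuclideanSpace ℝ (Fin n)))
      = ENNReal.ofReal |(r ^ n)⁻¹| • volume := by
  have h1 : (fun x : EuclideanSpace ℝ (Fin n) => r • x + c)
      = (fun y => y + c) ∘ (fun x => r • x) := rfl
  rw [h1, ← Measure.map_map (measurable_add_const c) (measurable_const_smul r),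
    Measure.map_addHaar_smul volume hr, Measure.map_smul, map_add_right_eq_self,
    finrank_euclideanSpace_fin]

private lemma lintegral_affine' {n : ℕ} {F : EuclideanSpace ℝ (Fin n) → ℝ≥0∞}
    (hF : AEMeasurable F (volume : Measure (EuclideanSpace ℝ (Fin n))))
    {r : ℝ} (hr : r ≠ 0) (c : EuclideanSpace ℝ (Fin n)) :
    ∫⁻ x, F (r • x + c) = ENNReal.ofReal |(r ^ n)⁻¹| * ∫⁻ x, F x := by
  have hT : AEMeasurable (fun x : EuclideanSpace ℝ (Fin n) => r • x + c) volume :=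
    ((measurable_const_smul r).add_const c).aemeasurable
  have hF' : AEMeasurable F
      (Measure.map (fun x : EuclideanSpace ℝ (Fin n) => r • x + c) volume) := by
    rw [map_affine' hr c]
    exact hF.smul_measure _
  rw [← lintegral_map' hF' hT, map_affine' hr c, lintegral_smul_measure, smul_eq_mul]

private lemma measure_affine_preimage' {n : ℕ} {r : ℝ} (hr : r ≠ 0)
    (c : EuclideanSpace ℝ (Fin n)) {A : Set (EuclideanSpace ℝ (Fin n))} (hA : MeasurableSet A) :
    volume ((fun x => r • x + c) ⁻¹' A) = ENNReal.ofReal |(r ^ n)⁻¹| * volume A := by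
  rw [← Measure.map_apply ((measurable_const_smul r).add_const c) hA, map_affine' hr c,
    Measure.smul_apply, smul_eq_mul]

private lemma key_pointwise' {u M D lam : ℝ} (hu : 0 ≤ u) (hM : 0 < M) (hlam0 : 0 < lam)
    (hD : 0 ≤ D) (hstep : M ^ (1 - lam) * u ^ lam ≤ D) :
    (1 - lam) * (u * Real.log (M / u)) + u ≤ D := by
  rcases eq_or_lt_of_le hu with h0 | hu0
  · simp [← h0] at hstep ⊢
    calc (0:ℝ) ≤ M ^ (1-lam) * (0:ℝ) ^ lam := by
          rw [Real.zero_rpow (by linarith : lam ≠ 0)]; simp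
      _ ≤ D := hstep
  · refine le_trans ?_ hstep
    have hMu : 0 < M / u := div_pos hM hu0
    have key : (1 - lam) * Real.log (M / u) + 1 ≤ (M / u) ^ (1 - lam) := by
      rw [Real.rpow_def_of_pos hMu, mul_comm]
      exact Real.add_one_le_exp _
    have h2 : u * ((1 - lam) * Real.log (M / u) + 1) ≤ u * (M / u) ^ (1 - lam) :=
      mul_le_mul_of_nonneg_left key hu0.le
    have h3 : u * (M / u) ^ (1 - lam) = M ^ (1 - lam) * u ^ lam := by
      rw [Real.div_rpow hM.le hu0.le, div_eq_mul_inv, ← Real.rpow_neg hu0.le]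
      have h4 : u = u ^ (1:ℝ) := (Real.rpow_one u).symm
      calc u * (M ^ (1-lam) * u ^ (-(1-lam)))
          = M ^ (1-lam) * (u ^ (1:ℝ) * u ^ (-(1-lam))) := by
            rw [← h4]; ring
        _ = M ^ (1-lam) * u ^ lam := by
            rw [← Real.rpow_add hu0]; norm_num
    calc (1 - lam) * (u * Real.log (M / u)) + u
        = u * ((1 - lam) * Real.log (M / u) + 1) := by ring
      _ ≤ u * (M / u) ^ (1 - lam) := h2
      _ = M ^ (1 - lam) * u ^ lam := h3

private lemma base_set' {f : EuclideanSpace ℝ (Fin n) → ℝ}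
    (hInt : Integrable f (volume : Measure (EuclideanSpace ℝ (Fin n))))
    (hlint : ∫⁻ x, ENNReal.ofReal (f x) = 1) :
    ∃ a : ℝ, 0 < a ∧ ∃ A : Set (EuclideanSpace ℝ (Fin n)), MeasurableSet A ∧
      0 < volume A ∧ volume A < ⊤ ∧ ∀ x ∈ A, a < f x := by
  set f₀ := hInt.1.mk f with hf₀def
  have hf₀ : f =ᵐ[volume] f₀ := hInt.1.ae_eq_mk
  have hf₀m : StronglyMeasurable f₀ := hInt.1.stronglyMeasurable_mk
  have hex : ∃ a : ℝ, 0 < a ∧ 0 < volume {x | a < f₀ x} := by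
    by_contra h
    push_neg at h
    have h' : ∀ k : ℕ, ∀ᵐ x ∂(volume : Measure (EuclideanSpace ℝ (Fin n))),
        f₀ x ≤ ((k:ℝ)+1)⁻¹ := by
      intro k
      have hk : (0:ℝ) < ((k:ℝ)+1)⁻¹ := by positivity
      have := h _ hk
      rw [le_zero_iff] at this
      rw [ae_iff]
      convert this using 2
      ext x; simp [not_le]
    have hae : ∀ᵐ x ∂(volume : Measure (EuclideanSpace ℝ (Fin n))), f₀ x ≤ 0 := by
      rw [← ae_all_iff] at h'
      filter_upwards [h'] with x hx
      by_contra hc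
      push_neg at hc
      obtain ⟨k, hk⟩ := exists_nat_gt (f₀ x)⁻¹
      have : ((k:ℝ)+1)⁻¹ < f₀ x := by
        rw [inv_lt_comm₀ (by positivity) hc]
        exact lt_trans hk (by linarith)
      exact absurd (hx k) (not_le.mpr this)
    have : ∫⁻ x, ENNReal.ofReal (f x) = 0 := by
      have hmz : AEMeasurable (fun x => ENNReal.ofReal (f x))
          (volume : Measure (EuclideanSpace ℝ (Fin n))) :=
        ENNReal.measurable_ofReal.comp_aemeasurable hInt.aemeasurable
      rw [lintegral_eq_zero_iff' hmz]
      filter_upwards [hf₀, hae] with x h1 h2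
      rw [h1]
      exact ENNReal.ofReal_eq_zero.mpr h2
    rw [hlint] at this; exact one_ne_zero this
  obtain ⟨a, ha, hpos⟩ := hex
  set N := toMeasurable volume {x | f x ≠ f₀ x} with hN
  have hNnull : volume N = 0 := by
    rw [measure_toMeasurable]
    exact hf₀
  set A := {x | a < f₀ x} \ N with hA
  have hmeasA : MeasurableSet A :=
    ((measurableSet_lt measurable_const hf₀m.measurable)).diff (measurableSet_toMeasurable _ _)
  refine ⟨a, ha, A, hmeasA, ?_, ?_, ?_⟩
  · rwa [measure_diff_null hNnull]
  · have hsub : A ⊆ {x | ENNReal.ofReal a ≤ ENNReal.ofReal (f x)} := by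
      intro x hx
      have hxn : f x = f₀ x := by
        by_contra hc
        exact hx.2 (subset_toMeasurable _ _ hc)
      exact ENNReal.ofReal_le_ofReal (le_of_lt (hxn ▸ hx.1))
    have hmark := mul_meas_ge_le_lintegral₀
      (ENNReal.measurable_ofReal.comp_aemeasurable hInt.aemeasurable) (ENNReal.ofReal a)
    simp only [Function.comp_apply] at hmark
    rw [hlint] at hmark
    have h1 : volume A ≤ volume {x | ENNReal.ofReal a ≤ ENNReal.ofReal (f x)} :=
      measure_mono hsub
    have h2 : volume {x | ENNReal.ofReal a ≤ ENNReal.ofReal (f x)} ≤ (ENNReal.ofReal a)⁻¹ :=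
      ENNReal.le_inv_iff_mul_le.mpr (by rwa [mul_comm])
    exact lt_of_le_of_lt (le_trans h1 h2) (ENNReal.inv_lt_top.mpr (ENNReal.ofReal_pos.mpr ha))
  · intro x hx
    have hxn : f x = f₀ x := by
      by_contra hc
      exact hx.2 (subset_toMeasurable _ _ hc)
    rw [hxn]; exact hx.1

private lemma logconcave_bounded' {f : EuclideanSpace ℝ (Fin n) → ℝ} (hf : LogConcaveDensity f)
    (hInt : Integrable f (volume : Measure (EuclideanSpace ℝ (Fin n))))
    (hlint : ∫⁻ x, ENNReal.ofReal (f x) = 1)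
    {a : ℝ} (ha : 0 < a) {A : Set (EuclideanSpace ℝ (Fin n))} (hmeasA : MeasurableSet A)
    (hApos : 0 < volume A) (hAf : ∀ x ∈ A, a < f x) :
    ∃ β : ℝ, ∀ x, f x ≤ β := by
  set k : ℝ≥0∞ := ENNReal.ofReal |(((2:ℝ))^n)⁻¹| with hk
  have hk0 : k ≠ 0 := by
    rw [hk]
    simp only [ne_eq, ENNReal.ofReal_eq_zero, not_le, abs_pos]
    positivity
  set W : ℝ≥0∞ := (k * volume A)⁻¹ with hW
  have hWtop : W ≠ ⊤ := by
    rw [hW, ne_eq, ENNReal.inv_eq_top]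
    exact mul_ne_zero hk0 hApos.ne'
  refine ⟨(W.toReal / a ^ ((2:ℝ)⁻¹)) ^ (2:ℝ), fun x₁ => ?_⟩
  set S : Set (EuclideanSpace ℝ (Fin n)) := (fun z => (2:ℝ) • z + (-x₁)) ⁻¹' A with hS
  have hvolS : volume S = k * volume A := measure_affine_preimage' two_ne_zero (-x₁) hmeasA
  set b : ℝ := f x₁ ^ ((2:ℝ)⁻¹) * a ^ ((2:ℝ)⁻¹) with hb
  have hSb : ∀ z ∈ S, b ≤ f z := by
    intro z hz
    have hy : (2:ℝ) • z + (-x₁) ∈ A := hz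
    have hz' : (2:ℝ)⁻¹ • x₁ + (1 - (2:ℝ)⁻¹) • ((2:ℝ) • z + (-x₁)) = z := by
      have h12 : (1 - (2:ℝ)⁻¹) = (2:ℝ)⁻¹ := by norm_num
      rw [h12, smul_add, smul_smul]
      norm_num
    have hcon := hf.2 x₁ ((2:ℝ) • z + (-x₁)) (2:ℝ)⁻¹ (by norm_num) (by norm_num)
    rw [hz'] at hcon
    refine le_trans ?_ hcon
    have h1 : a ^ ((2:ℝ)⁻¹) ≤ f ((2:ℝ) • z + (-x₁)) ^ (1 - (2:ℝ)⁻¹) := by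
      have h12 : (1 - (2:ℝ)⁻¹) = (2:ℝ)⁻¹ := by norm_num
      rw [h12]
      exact Real.rpow_le_rpow ha.le (hAf _ hy).le (by norm_num)
    exact mul_le_mul_of_nonneg_left h1 (Real.rpow_nonneg (hf.1 x₁) _)
  have hmark := mul_meas_ge_le_lintegral₀
    (ENNReal.measurable_ofReal.comp_aemeasurable hInt.aemeasurable) (ENNReal.ofReal b)
  simp only [Function.comp_apply] at hmark
  rw [hlint] at hmark
  have hsub : S ⊆ {x | ENNReal.ofReal b ≤ ENNReal.ofReal (f x)} :=
    fun z hz => ENNReal.ofReal_le_ofReal (hSb z hz)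
  have h2 : ENNReal.ofReal b * volume S ≤ 1 :=
    le_trans (mul_le_mul_right (measure_mono hsub) _) hmark
  rw [hvolS] at h2
  have h3 : ENNReal.ofReal b ≤ W := ENNReal.le_inv_iff_mul_le.mpr h2
  have h4 : b ≤ W.toReal := by
    rwa [← ENNReal.ofReal_le_iff_le_toReal hWtop]
  have h5 : f x₁ ^ ((2:ℝ)⁻¹) ≤ W.toReal / a ^ ((2:ℝ)⁻¹) := by
    rw [le_div_iff₀ (Real.rpow_pos_of_pos ha _)]
    exact hb ▸ h4
  calc f x₁ = (f x₁ ^ ((2:ℝ)⁻¹)) ^ (2:ℝ) := by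
        rw [← Real.rpow_mul (hf.1 x₁)]; norm_num
    _ ≤ (W.toReal / a ^ ((2:ℝ)⁻¹)) ^ (2:ℝ) :=
        Real.rpow_le_rpow (Real.rpow_nonneg (hf.1 x₁) _) h5 (by norm_num)

private lemma main_ineq' {f : EuclideanSpace ℝ (Fin n) → ℝ} (hf : LogConcaveDensity f)
    (hInt : Integrable f (volume : Measure (EuclideanSpace ℝ (Fin n))))
    (hlint : ∫⁻ x, ENNReal.ofReal (f x) = 1)
    {M : ℝ} (hM : 0 < M) (hMae : ∀ᵐ x ∂(volume : Measure (EuclideanSpace ℝ (Fin n))), f x ≤ M)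
    {x₀ : EuclideanSpace ℝ (Fin n)} (hx₀ : 0 < f x₀)
    {lam : ℝ} (h0 : 0 < lam) (h1 : lam < 1) :
    ENNReal.ofReal (1 - lam) * (∫⁻ x, ENNReal.ofReal (f x * Real.log (M / f x))) + 1
      ≤ ENNReal.ofReal ((M / f x₀) ^ (1 - lam)) * ENNReal.ofReal |((lam:ℝ) ^ n)⁻¹| := by
  have hfam : AEMeasurable f (volume : Measure (EuclideanSpace ℝ (Fin n))) := hInt.aemeasurable
  set g : EuclideanSpace ℝ (Fin n) → ℝ := fun x => f x * Real.log (M / f x) with hg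
  set D : ℝ := (M / f x₀) ^ (1 - lam) with hD
  have hD0 : 0 ≤ D := Real.rpow_nonneg (div_nonneg hM.le (hf.1 x₀)) _
  set T : EuclideanSpace ℝ (Fin n) → EuclideanSpace ℝ (Fin n) :=
    fun x => lam • x + (1 - lam) • x₀ with hT
  have hpt : ∀ x, (1 - lam) * g x + f x ≤ D * f (T x) := by
    intro x
    refine key_pointwise' (hf.1 x) hM h0 (mul_nonneg hD0 (hf.1 _)) ?_
    have hcon := hf.2 x x₀ lam h0 h1
    have h2 : D * (f x ^ lam * f x₀ ^ (1 - lam)) ≤ D * f (T x) :=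
      mul_le_mul_of_nonneg_left hcon hD0
    refine le_trans (le_of_eq ?_) h2
    rw [hD, ← mul_assoc, mul_comm ((M / f x₀) ^ (1-lam)) (f x ^ lam), mul_assoc,
      ← Real.mul_rpow (div_nonneg hM.le (hf.1 x₀)) (hf.1 x₀),
      div_mul_cancel₀ _ (ne_of_gt hx₀), mul_comm]
  have hae : ∀ᵐ x ∂(volume : Measure (EuclideanSpace ℝ (Fin n))),
      ENNReal.ofReal ((1-lam) * g x) + ENNReal.ofReal (f x)
        ≤ ENNReal.ofReal D * ENNReal.ofReal (f (T x)) := by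
    filter_upwards [hMae] with x hxM
    have hgx : 0 ≤ g x := by
      rcases eq_or_lt_of_le (hf.1 x) with h | h
      · simp [hg, ← h]
      · exact mul_nonneg (hf.1 x)
          (Real.log_nonneg ((one_le_div h).mpr hxM))
    rw [← ENNReal.ofReal_add (mul_nonneg (by linarith) hgx) (hf.1 x),
      ← ENNReal.ofReal_mul hD0]
    exact ENNReal.ofReal_le_ofReal (hpt x)
  have hgm : AEMeasurable (fun x => ENNReal.ofReal ((1-lam) * g x))
      (volume : Measure (EuclideanSpace ℝ (Fin n))) := by
    apply ENNReal.measurable_ofReal.comp_aemeasurable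
    exact (aemeasurable_const.mul
      (hfam.mul (Real.measurable_log.comp_aemeasurable (aemeasurable_const.div hfam))))
  have hFam : AEMeasurable (fun x => ENNReal.ofReal (f x))
      (volume : Measure (EuclideanSpace ℝ (Fin n))) :=
    ENNReal.measurable_ofReal.comp_aemeasurable hfam
  calc ENNReal.ofReal (1 - lam) * (∫⁻ x, ENNReal.ofReal (g x)) + 1
      = ∫⁻ x, (ENNReal.ofReal ((1-lam) * g x) + ENNReal.ofReal (f x)) := by
        rw [lintegral_add_left' hgm, hlint]
        congr 1
        rw [← lintegral_const_mul' _ _ ENNReal.ofReal_ne_top]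
        congr 1; funext x
        rw [← ENNReal.ofReal_mul (by linarith)]
    _ ≤ ∫⁻ x, ENNReal.ofReal D * ENNReal.ofReal (f (T x)) := lintegral_mono_ae hae
    _ = ENNReal.ofReal D * ∫⁻ x, ENNReal.ofReal (f (T x)) :=
        lintegral_const_mul' _ _ ENNReal.ofReal_ne_top
    _ = ENNReal.ofReal D * (ENNReal.ofReal |((lam:ℝ) ^ n)⁻¹| * 1) := by
        rw [lintegral_affine' hFam (ne_of_gt h0) ((1-lam) • x₀), hlint]
    _ = ENNReal.ofReal D * ENNReal.ofReal |((lam:ℝ) ^ n)⁻¹| := by rw [mul_one]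

private lemma limit_step' {J' c : ℝ} (n : ℕ)
    (h : ∀ lam : ℝ, lam ∈ Set.Ioo (0:ℝ) 1 →
      (1 - lam) * J' + 1 ≤ Real.exp ((1 - lam) * c) / lam ^ n) :
    J' ≤ (n : ℝ) + c := by
  set ψ : ℝ → ℝ := fun l => Real.exp ((1 - l) * c) / l ^ n with hψ
  have hψ1 : ψ 1 = 1 := by simp [hψ]
  have hnum : HasDerivAt (fun l : ℝ => Real.exp ((1 - l) * c)) (-c) 1 := by
    have h1 : HasDerivAt (fun l : ℝ => (1 - l) * c) (-c) 1 := by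
      simpa using (((hasDerivAt_id (1:ℝ)).const_sub (1:ℝ)).mul_const c)
    simpa using h1.exp
  have hden : HasDerivAt (fun l : ℝ => (l:ℝ) ^ n) ((n:ℝ) * 1 ^ (n - 1)) 1 :=
    hasDerivAt_pow n 1
  have hder : HasDerivAt ψ (-(c + n)) 1 := by
    have := hnum.fun_div hden (by norm_num : (1:ℝ) ^ n ≠ 0)
    refine this.congr_deriv ?_
    simp
    ring
  have hslope := hasDerivAt_iff_tendsto_slope.mp hder
  have h2 : Filter.Tendsto (fun l => -(slope ψ 1 l)) (nhdsWithin (1:ℝ) {(1:ℝ)}ᶜ)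
      (nhds (c + n)) := by
    simpa using hslope.neg
  have h3 : Filter.Tendsto (fun l => -(slope ψ 1 l)) (nhdsWithin (1:ℝ) (Set.Iio 1))
      (nhds (c + n)) :=
    h2.mono_left (nhdsWithin_mono 1 (fun y hy => ne_of_lt hy))
  have hev : ∀ᶠ l in nhdsWithin (1:ℝ) (Set.Iio 1), J' ≤ -(slope ψ 1 l) := by
    filter_upwards [Ioo_mem_nhdsLT_of_mem
      (⟨zero_lt_one, le_refl 1⟩ : (1:ℝ) ∈ Set.Ioc 0 1)] with l hl
    have h1l : 0 < 1 - l := by linarith [hl.2]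
    have hbd := h l hl
    have hΦ : J' ≤ (ψ l - 1) / (1 - l) := by
      rw [le_div_iff₀ h1l]
      nlinarith [hbd]
    have hs : -(slope ψ 1 l) = (ψ l - 1) / (1 - l) := by
      rw [slope_def_field, hψ1]
      have hne : l - 1 ≠ 0 := by intro hh; nlinarith [hl.2]
      field_simp
      ring
    rwa [hs]
  have := ge_of_tendsto h3 hev
  linarith

end Aux

/-- Entropy of a log-concave density is controlled by its maximum (Corollary 4.2):
-log ‖f‖ ≤ h(X) ≤ n - log ‖f‖. -/
theorem statement8 (n : ℕ) (f : EuclideanSpace ℝ (Fin n) → ℝ)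
    (hf : LogConcaveDensity f) (hint : ∫ x, f x = 1) :
    -Real.log (densSup f) ≤ ent f ∧ ent f ≤ n - Real.log (densSup f) := by
  classical
  have hInt : Integrable f (volume : Measure (EuclideanSpace ℝ (Fin n))) := by
    by_contra h
    rw [integral_undef h] at hint
    norm_num at hint
  have h0ae : 0 ≤ᵐ[(volume : Measure (EuclideanSpace ℝ (Fin n)))] f :=
    Filter.Eventually.of_forall hf.1
  have hlint : ∫⁻ x, ENNReal.ofReal (f x) = 1 := by
    rw [← ofReal_integral_eq_lintegral_ofReal hInt h0ae, hint, ENNReal.ofReal_one]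
  have hfam : AEMeasurable f (volume : Measure (EuclideanSpace ℝ (Fin n))) := hInt.aemeasurable
  obtain ⟨a, ha, A, hmeasA, hApos, hAfin, hAf⟩ := base_set' hInt hlint
  obtain ⟨β, hβ⟩ := logconcave_bounded' hf hInt hlint ha hmeasA hApos hAf
  set E : ℝ≥0∞ := essSup (fun x => ENNReal.ofReal (f x)) volume with hE
  have hEle : E ≤ ENNReal.ofReal β :=
    essSup_le_of_ae_le _ (Filter.Eventually.of_forall fun x => ENNReal.ofReal_le_ofReal (hβ x))
  have hEtop : E ≠ ⊤ := ne_top_of_le_ne_top ENNReal.ofReal_ne_top hEle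
  have haes : ∀ᵐ x ∂(volume : Measure (EuclideanSpace ℝ (Fin n))),
      ENNReal.ofReal (f x) ≤ E := ae_le_essSup
  have hE0 : E ≠ 0 := by
    intro h0
    have hz : ∀ᵐ x ∂(volume : Measure (EuclideanSpace ℝ (Fin n))),
        ENNReal.ofReal (f x) = 0 := by
      filter_upwards [haes] with x hx
      rw [h0] at hx
      exact le_zero_iff.mp hx
    rw [lintegral_congr_ae hz, lintegral_zero] at hlint
    exact one_ne_zero hlint.symm
  set M : ℝ := E.toReal with hM
  have hM0 : 0 < M := ENNReal.toReal_pos hE0 hEtop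
  have hEM : E = ENNReal.ofReal M := (ENNReal.ofReal_toReal hEtop).symm
  have hMae : ∀ᵐ x ∂(volume : Measure (EuclideanSpace ℝ (Fin n))), f x ≤ M := by
    filter_upwards [haes] with x hx
    rw [hEM] at hx
    exact (ENNReal.ofReal_le_ofReal_iff hM0.le).mp hx
  have hx₀ex : ∀ c : ℝ, c < M → ∃ x₀, c < f x₀ := by
    intro c hc
    by_contra hno
    push_neg at hno
    have hle : E ≤ ENNReal.ofReal c :=
      essSup_le_of_ae_le _
        (Filter.Eventually.of_forall fun x => ENNReal.ofReal_le_ofReal (hno x))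
    rw [hEM] at hle
    exact absurd hle (not_le.mpr ((ENNReal.ofReal_lt_ofReal_iff hM0).mpr hc))
  set g : EuclideanSpace ℝ (Fin n) → ℝ := fun x => f x * Real.log (M / f x) with hg
  set J : ℝ≥0∞ := ∫⁻ x, ENNReal.ofReal (g x) with hJ
  have hgae0 : ∀ᵐ x ∂(volume : Measure (EuclideanSpace ℝ (Fin n))), 0 ≤ g x := by
    filter_upwards [hMae] with x hxM
    rcases eq_or_lt_of_le (hf.1 x) with h | h
    · simp [hg, ← h]
    · exact mul_nonneg (hf.1 x) (Real.log_nonneg ((one_le_div h).mpr hxM))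
  have hJtop : J ≠ ⊤ := by
    obtain ⟨x₀, hx₀⟩ := hx₀ex (M / 2) (by linarith)
    have hx₀0 : 0 < f x₀ := lt_of_le_of_lt (by positivity) hx₀
    have hmain := main_ineq' hf hInt hlint hM0 hMae hx₀0
      (by norm_num : (0:ℝ) < 2⁻¹) (by norm_num : (2:ℝ)⁻¹ < 1)
    intro htop
    rw [← hJ] at hmain
    rw [htop, ENNReal.mul_top (ENNReal.ofReal_pos.mpr (by norm_num : (0:ℝ) < 1 - 2⁻¹)).ne',
      top_add, top_le_iff] at hmain
    exact (ENNReal.mul_ne_top ENNReal.ofReal_ne_top ENNReal.ofReal_ne_top) hmain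
  have hJn : J.toReal ≤ (n:ℝ) := by
    refine le_of_forall_pos_le_add fun c hc => ?_
    have hexp1 : Real.exp (-c) < 1 := Real.exp_lt_one_iff.mpr (by linarith)
    have hlt : M * Real.exp (-c) < M := by nlinarith [Real.exp_pos (-c)]
    obtain ⟨x₀, hx₀⟩ := hx₀ex _ hlt
    have hx₀0 : 0 < f x₀ := lt_of_le_of_lt (by positivity) hx₀
    have hKlt : M / f x₀ < Real.exp c := by
      rw [div_lt_iff₀ hx₀0]
      have hee : Real.exp (-c) * Real.exp c = 1 := by
        rw [← Real.exp_add]; simp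
      have hmm := mul_lt_mul_of_pos_right hx₀ (Real.exp_pos c)
      calc M = M * (Real.exp (-c) * Real.exp c) := by rw [hee, mul_one]
        _ = M * Real.exp (-c) * Real.exp c := by ring
        _ < f x₀ * Real.exp c := hmm
        _ = Real.exp c * f x₀ := by ring
    refine limit_step' n fun lam hlam => ?_
    have hlam0 := hlam.1
    have hlam1 := hlam.2
    have hmain := main_ineq' hf hInt hlint hM0 hMae hx₀0 hlam0 hlam1
    rw [← hJ] at hmain
    have hRne : ENNReal.ofReal ((M / f x₀) ^ (1 - lam)) * ENNReal.ofReal |((lam:ℝ) ^ n)⁻¹|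
        ≠ ⊤ := ENNReal.mul_ne_top ENNReal.ofReal_ne_top ENNReal.ofReal_ne_top
    have hmono := ENNReal.toReal_mono hRne hmain
    have hLHS : (ENNReal.ofReal (1 - lam) * J + 1).toReal = (1 - lam) * J.toReal + 1 := by
      rw [ENNReal.toReal_add (ENNReal.mul_ne_top ENNReal.ofReal_ne_top hJtop)
        ENNReal.one_ne_top, ENNReal.toReal_mul,
        ENNReal.toReal_ofReal (by linarith), ENNReal.toReal_one]
    have hRHS : (ENNReal.ofReal ((M / f x₀) ^ (1 - lam))
        * ENNReal.ofReal |((lam:ℝ) ^ n)⁻¹|).toReal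
        = (M / f x₀) ^ (1 - lam) * |((lam:ℝ) ^ n)⁻¹| := by
      rw [ENNReal.toReal_mul,
        ENNReal.toReal_ofReal (Real.rpow_nonneg (div_nonneg hM0.le (hf.1 x₀)) _),
        ENNReal.toReal_ofReal (abs_nonneg _)]
    rw [hLHS, hRHS] at hmono
    have habs : |((lam:ℝ) ^ n)⁻¹| = ((lam:ℝ) ^ n)⁻¹ := abs_of_pos (by positivity)
    have hKb : (M / f x₀) ^ (1 - lam) ≤ Real.exp ((1 - lam) * c) := by
      have h1 := Real.rpow_le_rpow (div_nonneg hM0.le (hf.1 x₀)) hKlt.le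
        (by linarith : (0:ℝ) ≤ 1 - lam)
      rwa [Real.rpow_def_of_pos (Real.exp_pos c), Real.log_exp, mul_comm c (1-lam)] at h1
    calc (1-lam) * J.toReal + 1
        ≤ (M / f x₀) ^ (1-lam) * |((lam:ℝ)^n)⁻¹| := hmono
      _ = (M / f x₀) ^ (1-lam) / lam^n := by rw [habs, ← div_eq_mul_inv]
      _ ≤ Real.exp ((1-lam)*c) / lam^n := by gcongr
  have hg_am : AEMeasurable g (volume : Measure (EuclideanSpace ℝ (Fin n))) :=
    hfam.mul (Real.measurable_log.comp_aemeasurable (aemeasurable_const.div hfam))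
  have hgInt : Integrable g (volume : Measure (EuclideanSpace ℝ (Fin n))) := by
    refine ⟨hg_am.aestronglyMeasurable, ?_⟩
    rw [hasFiniteIntegral_iff_ofReal hgae0]
    exact lt_top_iff_ne_top.mpr hJtop
  have hgint_eq : ∫ x, g x = J.toReal := by
    rw [integral_eq_lintegral_of_nonneg_ae hgae0 hg_am.aestronglyMeasurable]
  have hgint0 : 0 ≤ ∫ x, g x := integral_nonneg_of_ae hgae0
  have hid : ∀ x, f x * Real.log (f x) = f x * Real.log M - g x := by
    intro x
    rcases eq_or_lt_of_le (hf.1 x) with h | h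
    · simp [hg, ← h]
    · have : g x = f x * (Real.log M - Real.log (f x)) := by
        rw [hg]
        simp only
        rw [Real.log_div (ne_of_gt hM0) (ne_of_gt h)]
      rw [this]; ring
  have hintlog : ∫ x, f x * Real.log (f x) = Real.log M - ∫ x, g x := by
    calc ∫ x, f x * Real.log (f x) = ∫ x, (f x * Real.log M - g x) := by
          exact integral_congr_ae (Filter.Eventually.of_forall hid)
      _ = (∫ x, f x * Real.log M) - ∫ x, g x :=
          integral_sub (hInt.mul_const _) hgInt
      _ = Real.log M - ∫ x, g x := by
          rw [integral_mul_const, hint, one_mul]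
  have hds : densSup f = M := rfl
  have hent : ent f = (∫ x, g x) - Real.log M := by
    unfold ent
    rw [hintlog, neg_sub]
  rw [hds, hent]
  have hJn' : ∫ x, g x ≤ (n:ℝ) := hgint_eq ▸ hJn
  constructor
  · linarith
  · linarith
end

section
/- For any convex bodies A and B in ℝⁿ, sup_{x ∈ ℝⁿ} |(A − x) ∩ B| · |A − B| ≤ (2e)ⁿ · |A| · |B|, where A − x = {a − x : a ∈ A} and A − B = {a − b : a ∈ A, b ∈ B}. -/
open MeasureTheory ProbabilityTheory Real
open scoped Pointwise ENNReal

/-- A Rogers–Shephard-type inequality: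
sup_x |(A-x) ∩ B| · |A-B| ≤ (2e)ⁿ·|A|·|B|. -/
theorem statement11 (n : ℕ) (A B : Set (EuclideanSpace ℝ (Fin n)))
    (hA : IsConvexBody A) (hB : IsConvexBody B) :
    (⨆ x : EuclideanSpace ℝ (Fin n), volume ((A - {x}) ∩ B)) * volume (A - B) ≤
      ENNReal.ofReal ((2 * Real.exp 1) ^ n) * volume A * volume B := by
  obtain ⟨hAconv, hAcomp, -⟩ := hA
  obtain ⟨hBconv, hBcomp, -⟩ := hB
  have hAm : MeasurableSet A := hAcomp.isClosed.measurableSet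
  have hBm : MeasurableSet B := hBcomp.isClosed.measurableSet
  set K : Set (EuclideanSpace ℝ (Fin n)) := A - B with hKdef
  have hKcomp : IsCompact K := by
    have h : K = A + -B := by rw [hKdef, sub_eq_add_neg]
    rw [h]; exact hAcomp.add hBcomp.neg
  have hKm : MeasurableSet K := hKcomp.isClosed.measurableSet
  have hfr : Module.finrank ℝ (EuclideanSpace ℝ (Fin n)) = n := finrank_euclideanSpace_fin
  set W : Set (EuclideanSpace ℝ (Fin n) × EuclideanSpace ℝ (Fin n)) :=
    ((fun p : EuclideanSpace ℝ (Fin n) × EuclideanSpace ℝ (Fin n) => p.1 + p.2) ⁻¹' A) ∩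
      (Prod.snd ⁻¹' B) with hWdef
  have hWm : MeasurableSet W :=
    (hAm.preimage (measurable_fst.add measurable_snd)).inter (hBm.preimage measurable_snd)
  have hfib : ∀ x : EuclideanSpace ℝ (Fin n), Prod.mk x ⁻¹' W = (A - {x}) ∩ B := by
    intro x
    ext b
    simp only [hWdef, Set.mem_preimage, Set.mem_inter_iff, Set.mem_sub, Set.mem_singleton_iff]
    constructor
    · rintro ⟨hab, hb⟩
      exact ⟨⟨x + b, hab, x, rfl, by abel⟩, hb⟩
    · rintro ⟨⟨a, ha, c, hc, rfl⟩, hb⟩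
      have h : x + (a - c) = a := by rw [Set.eq_of_mem_singleton hc]; abel
      exact ⟨by rw [h]; exact ha, hb⟩
  -- Tonelli
  have hTon : ∫⁻ x : EuclideanSpace ℝ (Fin n), volume ((A - {x}) ∩ B)
      = volume A * volume B := by
    calc ∫⁻ x : EuclideanSpace ℝ (Fin n), volume ((A - {x}) ∩ B)
        = ∫⁻ x : EuclideanSpace ℝ (Fin n), volume (Prod.mk x ⁻¹' W) := by simp_rw [hfib]
      _ = (volume.prod volume) W := (Measure.prod_apply hWm).symm
      _ = ∫⁻ b : EuclideanSpace ℝ (Fin n), volume ((fun x => (x, b)) ⁻¹' W) :=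
          Measure.prod_apply_symm hWm
      _ = ∫⁻ b : EuclideanSpace ℝ (Fin n), B.indicator (fun _ => volume A) b := by
          congr 1; ext b
          by_cases hb : b ∈ B
          · rw [Set.indicator_of_mem hb]
            have h1 : (fun x : EuclideanSpace ℝ (Fin n) => (x, b)) ⁻¹' W
                = (fun x : EuclideanSpace ℝ (Fin n) => x + b) ⁻¹' A := by
              ext x; simp [hWdef, hb]
            rw [h1, measure_preimage_add_right]
          · rw [Set.indicator_of_notMem hb]
            have h1 : (fun x : EuclideanSpace ℝ (Fin n) => (x, b)) ⁻¹' W = ∅ := by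
              ext x; simp [hWdef, hb]
            simp [h1]
      _ = volume A * volume B := by
          rw [lintegral_indicator hBm, setLIntegral_const]
  -- pointwise key bound
  have key : ∀ x0 : EuclideanSpace ℝ (Fin n), volume ((A - {x0}) ∩ B) * volume K ≤
      (4 : ℝ≥0∞) ^ n * (volume A * volume B) := by
    intro x0
    set S := (A - {x0}) ∩ B with hSdef
    rcases eq_or_ne (volume S) 0 with h0 | h0
    · simp [h0]
    set C : Set (EuclideanSpace ℝ (Fin n)) := (2⁻¹ : ℝ) • ({x0} + K) with hCdef
    have hCcomp : IsCompact C := IsCompact.smul (2⁻¹ : ℝ) (isCompact_singleton.add hKcomp)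
    have hCm : MeasurableSet C := hCcomp.isClosed.measurableSet
    set c : ℝ≥0∞ := ENNReal.ofReal ((2 : ℝ)⁻¹ ^ n) with hcdef
    have hvolC : volume C = c * volume K := by
      rw [hCdef, Measure.addHaar_smul_of_nonneg volume (by norm_num), hfr]
      simp only [Set.singleton_add, Set.image_add_left, measure_preimage_add]
      rw [hcdef]
    have hpt : ∀ z ∈ C, c * volume S ≤ volume ((A - {z}) ∩ B) := by
      intro z hz
      obtain ⟨w, hwQ, rfl⟩ := Set.mem_smul_set.mp hz
      have hwe : ∃ y ∈ K, x0 + y = w := by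
        obtain ⟨u, hu, y, hy, rfl⟩ := Set.mem_add.mp hwQ
        exact ⟨y, hy, by rw [Set.eq_of_mem_singleton hu]⟩
      obtain ⟨y, hyK, rfl⟩ := hwe
      obtain ⟨a, ha, b, hb, rfl⟩ := Set.mem_sub.mp hyK
      have hsub : (2⁻¹ : ℝ) • S + {(2⁻¹ : ℝ) • b} ⊆
          (A - {(2⁻¹ : ℝ) • (x0 + (a - b))}) ∩ B := by
        rintro p hp
        obtain ⟨v, hv, w', hw', rfl⟩ := Set.mem_add.mp hp
        obtain ⟨s, hsS, rfl⟩ := Set.mem_smul_set.mp hv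
        obtain rfl : w' = (2⁻¹ : ℝ) • b := hw'
        obtain ⟨hsA, hsB⟩ := hsS
        obtain ⟨a', ha', x', hx', hax⟩ := Set.mem_sub.mp hsA
        rw [Set.eq_of_mem_singleton hx'] at hax
        have haa : (2⁻¹ : ℝ) • a' + (2⁻¹ : ℝ) • a ∈ A :=
          hAconv ha' ha (by norm_num) (by norm_num) (by norm_num)
        have hbb : (2⁻¹ : ℝ) • s + (2⁻¹ : ℝ) • b ∈ B :=
          hBconv hsB hb (by norm_num) (by norm_num) (by norm_num)
        refine ⟨⟨(2⁻¹ : ℝ) • a' + (2⁻¹ : ℝ) • a, haa,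
          (2⁻¹ : ℝ) • (x0 + (a - b)), rfl, ?_⟩, hbb⟩
        rw [← hax]
        module
      calc c * volume S = volume ((2⁻¹ : ℝ) • S) := by
            rw [Measure.addHaar_smul_of_nonneg volume (by norm_num), hfr]
        _ = volume ((2⁻¹ : ℝ) • S + {(2⁻¹ : ℝ) • b}) := by
            rw [Set.add_singleton, Set.image_add_right, measure_preimage_add_right]
        _ ≤ volume ((A - {(2⁻¹ : ℝ) • (x0 + (a - b))}) ∩ B) := measure_mono hsub
    -- integrate
    have hint : c * volume S * volume C ≤ volume A * volume B := by
      rw [← hTon]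
      calc c * volume S * volume C
          = ∫⁻ z : EuclideanSpace ℝ (Fin n), C.indicator (fun _ => c * volume S) z := by
            rw [lintegral_indicator hCm, setLIntegral_const]
        _ ≤ ∫⁻ z : EuclideanSpace ℝ (Fin n), volume ((A - {z}) ∩ B) := by
            refine lintegral_mono fun z => ?_
            by_cases hz : z ∈ C
            · rw [Set.indicator_of_mem hz]; exact hpt z hz
            · rw [Set.indicator_of_notMem hz]; exact zero_le
    have hc' : c = ((2 : ℝ≥0∞) ^ n)⁻¹ := by
      rw [hcdef, ENNReal.ofReal_pow (by norm_num), ENNReal.ofReal_inv_of_pos (by norm_num),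
        ← ENNReal.inv_pow]
      norm_num
    have hc2 : (2 : ℝ≥0∞) ^ n * c = 1 := by
      rw [hc']
      exact ENNReal.mul_inv_cancel (pow_ne_zero n two_ne_zero)
        (ENNReal.pow_ne_top ENNReal.ofNat_ne_top)
    have h4 : (4 : ℝ≥0∞) ^ n = (2 : ℝ≥0∞) ^ n * (2 : ℝ≥0∞) ^ n := by
      rw [← mul_pow]; norm_num
    calc volume S * volume K
        = ((2 : ℝ≥0∞) ^ n * c) * volume S * (((2 : ℝ≥0∞) ^ n * c) * volume K) := by
          rw [hc2]; ring
      _ = (4 : ℝ≥0∞) ^ n * (c * volume S * (c * volume K)) := by rw [h4]; ring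
      _ = (4 : ℝ≥0∞) ^ n * (c * volume S * volume C) := by rw [hvolC]
      _ ≤ (4 : ℝ≥0∞) ^ n * (volume A * volume B) := mul_le_mul_right hint _
  -- conclude
  have h4e : (4 : ℝ≥0∞) ^ n ≤ ENNReal.ofReal ((2 * Real.exp 1) ^ n) := by
    rw [ENNReal.ofReal_pow (by positivity)]
    refine pow_le_pow_left₀ (by norm_num) ?_ n
    have h2e : (4 : ℝ) ≤ 2 * Real.exp 1 := by
      nlinarith [Real.add_one_le_exp 1]
    calc (4 : ℝ≥0∞) = ENNReal.ofReal 4 := by norm_num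
      _ ≤ ENNReal.ofReal (2 * Real.exp 1) := ENNReal.ofReal_le_ofReal h2e
  rw [ENNReal.iSup_mul, mul_assoc]
  refine iSup_le fun x0 => le_trans (key x0) ?_
  exact mul_le_mul_left h4e _
end

section
/- Fix β₀ > 1 and set c₀ = exp(−32β₀/(β₀ − 1)). Let μ be a probability measure on ℝⁿ whose density f is of convex form with parameter β, where β ≥ n+1 and β ≥ β₀·n. Then μ({x : f(x) ≥ c₀ⁿ·‖f‖}) ≥ 1/2. -/
open MeasureTheory ProbabilityTheory Real
open scoped Pointwise ENNReal

section Helpers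
open Real


set_option maxHeartbeats 1000000 in
lemma arith_lemma (n : ℕ) (hn : 0 < n) (γ β : ℝ) (hγ : 1 < γ)
    (hβ : (n : ℝ) + 1 ≤ β) (hγd : β ≤ γ * (β - n)) :
    ∃ l : ℝ, 0 < l ∧ l < 1 ∧
      (l + (1 - l) * Real.exp (-(24 * γ * n / β))) ^ β ≤ l ^ (n : ℝ) / 2 := by
  have hn1 : (1:ℝ) ≤ (n:ℝ) := by exact_mod_cast hn
  have hβpos : (0:ℝ) < β := by linarith
  have hγpos : (0:ℝ) < γ := by linarith
  have hd1 : (1:ℝ) ≤ β - n := by linarith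
  obtain ⟨ρ, hρdef⟩ : ∃ ρ : ℝ, ρ = 24 * γ * n / β := ⟨_, rfl⟩
  rw [← hρdef]
  have hρpos : 0 < ρ := by
    rw [hρdef]
    apply div_pos _ hβpos; positivity
  have hdρ : 24 * (n:ℝ) ≤ (β - n) * ρ := by
    have h1 : (β - n) * ρ = 24 * n * (γ * (β - n)) / β := by
      rw [hρdef]; ring
    rw [h1]
    rw [le_div_iff₀ hβpos]
    nlinarith [hγd, hn1, hd1]
  have hβn : 0 ≤ β := hβpos.le
  rcases le_or_gt ρ 1 with hρ1 | hρ1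
  · -- small ρ case : l = 1/2
    refine ⟨1/2, by norm_num, by norm_num, ?_⟩
    have hexpneg : Real.exp (-ρ) ≤ 1 - ρ/2 := by
      have hmul : Real.exp (-ρ) * Real.exp ρ = 1 := by
        rw [← Real.exp_add]; simp
      nlinarith [Real.add_one_le_exp ρ, Real.exp_pos (-ρ), Real.exp_pos ρ,
        mul_nonneg hρpos.le (sub_nonneg.mpr hρ1)]
    have hs0 : (0:ℝ) ≤ 1/2 + (1 - 1/2) * Real.exp (-ρ) := by positivity
    have hs1 : (1/2 : ℝ) + (1 - 1/2) * Real.exp (-ρ) ≤ 1 - ρ/4 := by linarith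
    have h2 : ((1/2 : ℝ) + (1 - 1/2) * Real.exp (-ρ)) ^ β ≤ (1 - ρ/4) ^ β :=
      Real.rpow_le_rpow hs0 hs1 hβn
    have h3 : ((1:ℝ) - ρ/4) ^ β ≤ (Real.exp (-(ρ/4))) ^ β := by
      apply Real.rpow_le_rpow (by linarith) _ hβn
      linarith [Real.add_one_le_exp (-(ρ/4))]
    have h4 : (Real.exp (-(ρ/4))) ^ β = Real.exp (-(6*γ*n)) := by
      rw [← Real.exp_mul]
      congr 1
      rw [hρdef]; field_simp; ring
    have h5 : Real.exp (-(6*γ*(n:ℝ))) ≤ (1/2 : ℝ) ^ (n:ℝ) / 2 := by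
      have he2 : (2:ℝ) ≤ Real.exp 1 := by
        have := Real.add_one_le_exp 1; linarith
      have hei : Real.exp (-1) ≤ 1/2 := by
        rw [Real.exp_neg]
        rw [inv_le_comm₀ (Real.exp_pos 1) (by norm_num)]
        norm_num; linarith
      have h6 : Real.exp (-(n:ℝ)) ≤ (1/2:ℝ) ^ (n:ℝ) := by
        have : (Real.exp (-1)) ^ (n:ℝ) ≤ (1/2:ℝ) ^ (n:ℝ) :=
          Real.rpow_le_rpow (Real.exp_pos _).le hei (by positivity)
        calc Real.exp (-(n:ℝ)) = (Real.exp (-1)) ^ (n:ℝ) := by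
              rw [← Real.exp_mul]; ring_nf
          _ ≤ (1/2:ℝ) ^ (n:ℝ) := this
      calc Real.exp (-(6*γ*(n:ℝ))) ≤ Real.exp (-((n:ℝ)+1)) := by
            apply Real.exp_le_exp.mpr; nlinarith
        _ = Real.exp (-(n:ℝ)) * Real.exp (-1) := by rw [← Real.exp_add]; ring_nf
        _ ≤ (1/2:ℝ)^(n:ℝ) * (1/2) := by
            apply mul_le_mul h6 hei (Real.exp_pos _).le (by positivity)
        _ = (1/2:ℝ)^(n:ℝ) / 2 := by ring
    calc ((1/2 : ℝ) + (1 - 1/2) * Real.exp (-ρ)) ^ β ≤ (1 - ρ/4) ^ β := h2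
      _ ≤ (Real.exp (-(ρ/4))) ^ β := h3
      _ = Real.exp (-(6*γ*n)) := h4
      _ ≤ (1/2 : ℝ) ^ (n:ℝ) / 2 := h5
  · -- large ρ case
    obtain ⟨θ, hθdef⟩ : ∃ θ : ℝ, θ = (β - n)/(2*β) := ⟨_, rfl⟩
    have hθpos : 0 < θ := by
      rw [hθdef]; exact div_pos (by linarith) (by linarith)
    have hθhalf : θ ≤ 1/2 := by
      rw [hθdef, div_le_iff₀ (by linarith)]; nlinarith
    have hθρ : 1/4 ≤ θ * ρ := by
      have h1 : β - n ≤ (β - n) * ρ := le_mul_of_one_le_right (by linarith) hρ1.le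
      have h2 : θ * ρ = (β - n) * ρ / (2*β) := by rw [hθdef]; ring
      rw [h2, le_div_iff₀ (by linarith)]
      nlinarith
    obtain ⟨l, hldef⟩ : ∃ l : ℝ, l = (Real.exp (θ*ρ) - 1) * Real.exp (-ρ) := ⟨_, rfl⟩
    have hexpθ : 1/4 ≤ Real.exp (θ*ρ) - 1 := by
      have := Real.add_one_le_exp (θ*ρ); linarith
    have hlpos : 0 < l := by
      rw [hldef]
      apply mul_pos (by linarith) (Real.exp_pos _)
    have hsum : l + Real.exp (-ρ) = Real.exp (θ*ρ + -ρ) := by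
      rw [hldef, Real.exp_add]; ring
    have hl1 : l < 1 := by
      have h1 : θ*ρ + -ρ < 0 := by nlinarith
      have h2 : Real.exp (θ*ρ + -ρ) < 1 := Real.exp_lt_one_iff.mpr h1
      have h3 := Real.exp_pos (-ρ)
      linarith [hsum]
    refine ⟨l, hlpos, hl1, ?_⟩
    have hspos : (0:ℝ) ≤ l + (1 - l) * Real.exp (-ρ) := by
      have := mul_nonneg (by linarith : (0:ℝ) ≤ 1 - l) (Real.exp_pos (-ρ)).le
      linarith
    have hsle : l + (1 - l) * Real.exp (-ρ) ≤ Real.exp (θ*ρ + -ρ) := by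
      rw [← hsum]
      have h1 : (1 - l) * Real.exp (-ρ) ≤ Real.exp (-ρ) := by
        apply mul_le_of_le_one_left (Real.exp_pos _).le; linarith
      linarith
    have hstep1 : (l + (1 - l) * Real.exp (-ρ)) ^ β ≤ Real.exp ((θ*ρ + -ρ) * β) := by
      calc (l + (1 - l) * Real.exp (-ρ)) ^ β ≤ (Real.exp (θ*ρ + -ρ)) ^ β :=
            Real.rpow_le_rpow hspos hsle hβn
        _ = Real.exp ((θ*ρ + -ρ) * β) := (Real.exp_mul _ _).symm
    -- lower bound on l ^ n
    have he2 : (2:ℝ) ≤ Real.exp 1 := by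
      have := Real.add_one_le_exp 1; linarith
    have hei : Real.exp (-1) ≤ 1/2 := by
      rw [Real.exp_neg, inv_le_comm₀ (Real.exp_pos 1) (by norm_num)]
      linarith
    have hq : Real.exp (-2) ≤ (1/4 : ℝ) := by
      have h2 : Real.exp (-2) = Real.exp (-1) * Real.exp (-1) := by
        rw [← Real.exp_add]; norm_num
      rw [h2]
      calc Real.exp (-1) * Real.exp (-1) ≤ (1/2) * (1/2) :=
            mul_le_mul hei hei (Real.exp_pos _).le (by norm_num)
        _ = 1/4 := by norm_num
    have hlge : Real.exp (-2) * Real.exp (-ρ) ≤ l := by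
      rw [hldef]
      apply mul_le_mul (by linarith) le_rfl (Real.exp_pos _).le (by linarith)
    have hln : Real.exp ((-2 + -ρ) * (n:ℝ)) ≤ l ^ (n:ℝ) := by
      calc Real.exp ((-2 + -ρ) * (n:ℝ)) = (Real.exp (-2 + -ρ)) ^ (n:ℝ) := Real.exp_mul _ _
        _ = (Real.exp (-2) * Real.exp (-ρ)) ^ (n:ℝ) := by rw [Real.exp_add]
        _ ≤ l ^ (n:ℝ) := Real.rpow_le_rpow (by positivity) hlge (by positivity)
    have hfinal : Real.exp ((θ*ρ + -ρ) * β) ≤ Real.exp ((-2 + -ρ) * (n:ℝ)) / 2 := by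
      have key : (θ*ρ + -ρ) * β ≤ (-2 + -ρ) * (n:ℝ) + -1 := by
        have hθβ : (θ*ρ + -ρ) * β = -((β + n)/2) * ρ := by
          rw [hθdef]; field_simp; ring
        rw [hθβ]
        linarith [hdρ, hn1]
      calc Real.exp ((θ*ρ + -ρ) * β) ≤ Real.exp ((-2 + -ρ) * (n:ℝ) + -1) :=
            Real.exp_le_exp.mpr key
        _ = Real.exp ((-2 + -ρ) * (n:ℝ)) * Real.exp (-1) := Real.exp_add _ _
        _ ≤ Real.exp ((-2 + -ρ) * (n:ℝ)) * (1/2) := by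
            apply mul_le_mul_of_nonneg_left hei (Real.exp_pos _).le
        _ = Real.exp ((-2 + -ρ) * (n:ℝ)) / 2 := by ring
    calc (l + (1 - l) * Real.exp (-ρ)) ^ β ≤ Real.exp ((θ*ρ + -ρ) * β) := hstep1
      _ ≤ Real.exp ((-2 + -ρ) * (n:ℝ)) / 2 := hfinal
      _ ≤ l ^ (n:ℝ) / 2 := by linarith


end Helpers

set_option maxHeartbeats 1000000 in
/-- Effective support of convex measures (Proposition 5.2): a sufficiently convex
probability measure gives mass at least 1/2 to the set where its density is at least
c₀ⁿ·‖f‖, with c₀ = exp(-32β₀/(β₀-1)). -/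
theorem statement12 (β₀ : ℝ) (hβ₀ : 1 < β₀) (n : ℕ) (β : ℝ)
    (hβ1 : (n : ℝ) + 1 ≤ β) (hβ2 : β₀ * n ≤ β)
    (μ : Measure (EuclideanSpace ℝ (Fin n))) [IsProbabilityMeasure μ]
    (f : EuclideanSpace ℝ (Fin n) → ℝ)
    (hμ : μ = volume.withDensity (fun x => ENNReal.ofReal (f x)))
    (hf : ConvexForm f β) :
    (1 / 2 : ℝ≥0∞) ≤
      μ {x | Real.exp (-32 * β₀ / (β₀ - 1)) ^ n * densSup f ≤ f x} := by
  classical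
  obtain ⟨S, V, hSopen, hSconv, hVconv, hVpos, hfS, hfSc⟩ := hf
  have hfnonneg : ∀ x, 0 ≤ f x := by
    intro x
    by_cases hx : x ∈ S
    · rw [hfS x hx]
      exact Real.rpow_nonneg (hVpos x hx).le _
    · rw [hfSc x hx]
  have hμuniv : μ Set.univ = 1 := measure_univ
  have hhalf : (1/2 : ℝ≥0∞) ≤ 1 := ENNReal.half_le_self
  rcases Nat.eq_zero_or_pos n with hn0 | hnpos
  · subst hn0
    have hsub : ∀ x y : EuclideanSpace ℝ (Fin 0), x = y := fun x y =>
      by ext i; exact i.elim0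
    have hset : {x | Real.exp (-32 * β₀ / (β₀ - 1)) ^ 0 * densSup f ≤ f x} = Set.univ := by
      ext x
      simp only [pow_zero, one_mul, Set.mem_setOf_eq, Set.mem_univ, iff_true]
      have h1 : essSup (fun y => ENNReal.ofReal (f y)) volume ≤ ENNReal.ofReal (f x) :=
        essSup_le_of_ae_le _ (Filter.Eventually.of_forall fun y => by rw [hsub y x])
      calc densSup f ≤ (ENNReal.ofReal (f x)).toReal :=
            ENNReal.toReal_mono ENNReal.ofReal_ne_top h1
        _ = f x := ENNReal.toReal_ofReal (hfnonneg x)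
    rw [hset, hμuniv]; exact hhalf
  have hn1 : (1:ℝ) ≤ (n:ℝ) := by exact_mod_cast hnpos
  rcases eq_or_ne (essSup (fun x => ENNReal.ofReal (f x)) volume) ⊤ with htop | hfin
  · have hds : densSup f = 0 := by
      simp only [densSup, htop, ENNReal.toReal_top]
    have hset : {x | Real.exp (-32 * β₀ / (β₀ - 1)) ^ n * densSup f ≤ f x} = Set.univ := by
      ext x
      simp only [hds, mul_zero, Set.mem_setOf_eq, Set.mem_univ, iff_true]
      exact hfnonneg x
    rw [hset, hμuniv]; exact hhalf
  -- main case
  have hβpos : (0:ℝ) < β := by linarith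
  have hβ0pos : (0:ℝ) < β₀ - 1 := by linarith
  obtain ⟨γ, hγdef⟩ : ∃ γ : ℝ, γ = β₀ / (β₀ - 1) := ⟨_, rfl⟩
  have hγ1 : 1 < γ := by
    rw [hγdef, lt_div_iff₀ hβ0pos]; linarith
  have hγpos : (0:ℝ) < γ := by linarith
  have hγd : β ≤ γ * (β - n) := by
    have h1 : γ * (β - n) - β = (β - β₀ * n) / (β₀ - 1) := by
      rw [hγdef]; field_simp; ring
    have h2 : 0 ≤ (β - β₀ * n) / (β₀ - 1) := div_nonneg (by linarith) hβ0pos.le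
    linarith
  obtain ⟨α, hαdef⟩ : ∃ α : ℝ, α = 32 * γ * n / β := ⟨_, rfl⟩
  obtain ⟨ρ, hρdef⟩ : ∃ ρ : ℝ, ρ = 24 * γ * n / β := ⟨_, rfl⟩
  have hnpos' : (0:ℝ) < n := by linarith
  have hαpos : 0 < α := by rw [hαdef]; positivity
  have hρα : ρ = 3/4 * α := by rw [hρdef, hαdef]; ring
  have hVcont : ContinuousOn V S := hVconv.continuousOn hSopen
  have hfScont : ContinuousOn f S := by
    have h0 : ContinuousOn (fun x => V x ^ (-β)) S :=
      hVcont.rpow_const fun x hx => Or.inl (hVpos x hx).ne'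
    exact h0.congr fun x hx => hfS x hx
  have hSmeas : MeasurableSet S := hSopen.measurableSet
  have hfmeas : Measurable f := by
    apply measurable_of_isOpen
    intro U hU
    rw [← Set.inter_union_compl (f ⁻¹' U) S]
    refine MeasurableSet.union ?_ ?_
    · rw [Set.inter_comm]
      exact (hfScont.isOpen_inter_preimage hSopen hU).measurableSet
    · by_cases h0 : (0:ℝ) ∈ U
      · have he : f ⁻¹' U ∩ Sᶜ = Sᶜ := by
          ext x
          constructor
          · exact fun h => h.2
          · exact fun hx => ⟨by simp only [Set.mem_preimage, hfSc x hx]; exact h0, hx⟩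
        rw [he]; exact hSmeas.compl
      · have he : f ⁻¹' U ∩ Sᶜ = ∅ := by
          ext x
          simp only [Set.mem_inter_iff, Set.mem_preimage, Set.mem_compl_iff,
            Set.mem_empty_iff_false, iff_false, not_and]
          intro h1 h2
          exact h0 (hfSc x h2 ▸ h1)
        rw [he]; exact MeasurableSet.empty
  have hgmeas : Measurable fun x => ENNReal.ofReal (f x) := hfmeas.ennreal_ofReal
  have hSne : S.Nonempty := by
    by_contra h
    rw [Set.not_nonempty_iff_eq_empty] at h
    have h0 : μ Set.univ = 0 := by
      rw [hμ, withDensity_apply _ MeasurableSet.univ, Measure.restrict_univ]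
      have hz : ∀ x, ENNReal.ofReal (f x) = 0 := fun x => by
        rw [hfSc x (by rw [h]; exact Set.notMem_empty x), ENNReal.ofReal_zero]
      simp only [hz, lintegral_zero]
    rw [hμuniv] at h0
    exact one_ne_zero h0
  have hbdd : BddBelow (V '' S) :=
    ⟨0, fun y hy => by obtain ⟨x, hx, rfl⟩ := hy; exact (hVpos x hx).le⟩
  obtain ⟨m, hmdef⟩ : ∃ m : ℝ, m = sInf (V '' S) := ⟨_, rfl⟩
  have hmne : (V '' S).Nonempty := hSne.image V
  have hm0 : 0 ≤ m := by
    rw [hmdef]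
    exact le_csInf hmne fun y hy => by obtain ⟨x, hx, rfl⟩ := hy; exact (hVpos x hx).le
  have hmle : ∀ x ∈ S, m ≤ V x := fun x hx => hmdef ▸ csInf_le hbdd ⟨x, hx, rfl⟩
  have hmpos : 0 < m := by
    rcases hm0.lt_or_eq with h | h
    · exact h
    exfalso
    obtain ⟨R, hRdef⟩ : ∃ R : ℝ,
        R = (essSup (fun x => ENNReal.ofReal (f x)) volume).toReal := ⟨_, rfl⟩
    have hR0 : 0 ≤ R := hRdef ▸ ENNReal.toReal_nonneg
    have hlt : essSup (fun x => ENNReal.ofReal (f x)) volume < ENNReal.ofReal (R + 1) := by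
      rw [show essSup (fun x => ENNReal.ofReal (f x)) volume = ENNReal.ofReal R from by
        rw [hRdef, ENNReal.ofReal_toReal hfin]]
      exact (ENNReal.ofReal_lt_ofReal_iff (by linarith)).mpr (by linarith)
    have hae := ae_lt_of_essSup_lt hlt
    obtain ⟨ε, hεdef⟩ : ∃ ε : ℝ, ε = (R + 1) ^ (-(1:ℝ)/β) := ⟨_, rfl⟩
    have hεpos : 0 < ε := hεdef ▸ Real.rpow_pos_of_pos (by linarith) _
    have hex : ∃ y ∈ V '' S, y < ε := by
      apply (csInf_lt_iff hbdd hmne).mp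
      rw [← hmdef, ← h]
      exact hεpos
    obtain ⟨y, hy, hyε⟩ := hex
    obtain ⟨x₀, hx₀S, rfl⟩ := hy
    have hUopen : IsOpen (S ∩ V ⁻¹' Set.Iio ε) :=
      hVcont.isOpen_inter_preimage hSopen isOpen_Iio
    have hUne : (S ∩ V ⁻¹' Set.Iio ε).Nonempty := ⟨x₀, hx₀S, hyε⟩
    have hUpos : 0 < volume (S ∩ V ⁻¹' Set.Iio ε) := hUopen.measure_pos volume hUne
    have hUsub : (S ∩ V ⁻¹' Set.Iio ε) ⊆
        {x | ¬ (fun x => ENNReal.ofReal (f x)) x < ENNReal.ofReal (R+1)} := by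
      rintro x ⟨hxS, hxV⟩
      simp only [Set.mem_setOf_eq, not_lt]
      have h2 : ε ^ (-β) ≤ V x ^ (-β) :=
        Real.rpow_le_rpow_of_nonpos (hVpos x hxS) (le_of_lt hxV) (by linarith)
      have h3 : ε ^ (-β) = R + 1 := by
        rw [hεdef, ← Real.rpow_mul (by linarith : (0:ℝ) ≤ R + 1)]
        rw [show (-(1:ℝ)/β) * (-β) = 1 from by field_simp]
        exact Real.rpow_one _
      apply ENNReal.ofReal_le_ofReal
      rw [hfS x hxS]
      linarith [h2]
    rw [ae_iff] at hae
    exact absurd (measure_mono_null hUsub hae) hUpos.ne'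
  have hM : densSup f ≤ m ^ (-β) := by
    have h1 : essSup (fun x => ENNReal.ofReal (f x)) volume ≤ ENNReal.ofReal (m ^ (-β)) := by
      refine essSup_le_of_ae_le _ ?_
      apply Filter.Eventually.of_forall
      intro x
      by_cases hx : x ∈ S
      · apply ENNReal.ofReal_le_ofReal
        rw [hfS x hx]
        exact Real.rpow_le_rpow_of_nonpos hmpos (hmle x hx) (by linarith)
      · simp only [hfSc x hx, ENNReal.ofReal_zero]; exact zero_le
    calc densSup f ≤ (ENNReal.ofReal (m ^ (-β))).toReal :=
          ENNReal.toReal_mono ENNReal.ofReal_ne_top h1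
      _ = m ^ (-β) := ENNReal.toReal_ofReal (Real.rpow_nonneg hm0 _)
  have hea : m < m * Real.exp (α/4) := by
    nlinarith [Real.one_lt_exp_iff.mpr (show 0 < α/4 by linarith), hmpos]
  obtain ⟨ya, hya, haV⟩ : ∃ y ∈ V '' S, y < m * Real.exp (α/4) := by
    apply (csInf_lt_iff hbdd hmne).mp
    rw [← hmdef]; exact hea
  obtain ⟨a, haS, rfl⟩ := hya
  obtain ⟨l, hl0, hl1, hls⟩ := arith_lemma n hnpos γ β hγ1 hβ1 hγd
  rw [← hρdef] at hls
  obtain ⟨s, hsdef⟩ : ∃ s : ℝ, s = l + (1 - l) * Real.exp (-ρ) := ⟨_, rfl⟩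
  rw [← hsdef] at hls
  have hspos : 0 < s := by
    rw [hsdef]
    have := mul_nonneg (by linarith : (0:ℝ) ≤ 1 - l) (Real.exp_pos (-ρ)).le
    linarith
  obtain ⟨t, htdef⟩ : ∃ t : ℝ, t = Real.exp α := ⟨_, rfl⟩
  have htpos : 0 < t := htdef ▸ Real.exp_pos α
  have hAopen : IsOpen (S ∩ V ⁻¹' Set.Ioi (t * m)) :=
    hVcont.isOpen_inter_preimage hSopen isOpen_Ioi
  have hAmeas := hAopen.measurableSet
  obtain ⟨T, hTdef⟩ : ∃ T : EuclideanSpace ℝ (Fin n) → EuclideanSpace ℝ (Fin n),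
      T = fun x => a + l • (x - a) := ⟨_, rfl⟩
  have hTcont : Continuous T := by
    rw [hTdef]
    exact continuous_const.add ((continuous_id.sub continuous_const).const_smul l)
  have hTcomb : ∀ x, T x = (1 - l) • a + l • x := by
    intro x; rw [hTdef]
    simp only
    rw [smul_sub, sub_smul, one_smul]
    abel
  have hTS : ∀ x ∈ S, T x ∈ S := by
    intro x hx
    rw [hTcomb]
    exact hSconv haS hx (by linarith) (by linarith) (by ring)
  have hVT : ∀ x ∈ S, V (T x) ≤ (1 - l) * V a + l * V x := by
    intro x hx
    rw [hTcomb]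
    exact hVconv.2 haS hx (by linarith) (by linarith) (by ring)
  have hkey : ∀ x ∈ S ∩ V ⁻¹' Set.Ioi (t * m), s ^ (-β) * f x ≤ f (T x) := by
    rintro x ⟨hxS, hxV⟩
    have hxV' : t * m < V x := hxV
    have hVx : 0 < V x := hVpos x hxS
    have hTxS : T x ∈ S := hTS x hxS
    have hVa : V a ≤ Real.exp (-ρ) * V x := by
      have h1 : Real.exp (-ρ) * (t * m) ≤ Real.exp (-ρ) * V x :=
        mul_le_mul_of_nonneg_left hxV'.le (Real.exp_pos _).le
      have h2 : Real.exp (-ρ) * (t * m) = Real.exp (α/4) * m := by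
        rw [htdef, ← mul_assoc, ← Real.exp_add]
        have : -ρ + α = α/4 := by rw [hρα]; ring
        rw [this]
      linarith [haV]
    have hVTx : V (T x) ≤ s * V x := by
      have h3 := hVT x hxS
      have h4 : (1-l) * V a ≤ (1-l) * (Real.exp (-ρ) * V x) :=
        mul_le_mul_of_nonneg_left hVa (by linarith)
      have h5 : (1-l) * (Real.exp (-ρ) * V x) + l * V x = s * V x := by
        rw [hsdef]; ring
      linarith
    have h6 : (s * V x) ^ (-β) ≤ V (T x) ^ (-β) :=
      Real.rpow_le_rpow_of_nonpos (hVpos _ hTxS) hVTx (by linarith)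
    rw [Real.mul_rpow hspos.le hVx.le] at h6
    rw [hfS x hxS, hfS _ hTxS]
    exact h6
  obtain ⟨D, hDdef⟩ : ∃ D : EuclideanSpace ℝ (Fin n) →L[ℝ] EuclideanSpace ℝ (Fin n),
      D = l • ContinuousLinearMap.id ℝ (EuclideanSpace ℝ (Fin n)) := ⟨_, rfl⟩
  have hD : ∀ x ∈ (S ∩ V ⁻¹' Set.Ioi (t * m)),
      HasFDerivWithinAt T D (S ∩ V ⁻¹' Set.Ioi (t * m)) x := by
    intro x hx
    have h1 : HasFDerivAt T D x := by
      rw [hTdef, hDdef]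
      exact (((hasFDerivAt_id x).sub_const a).const_smul l).const_add a
    exact h1.hasFDerivWithinAt
  have hTinj : Set.InjOn T (S ∩ V ⁻¹' Set.Ioi (t * m)) := by
    intro x _ y _ hxy
    rw [hTdef] at hxy
    simp only at hxy
    have h1 : l • (x - a) = l • (y - a) := add_left_cancel hxy
    have h2 : x - a = y - a := smul_right_injective _ hl0.ne' h1
    exact sub_left_injective h2
  have hdet : D.det = l ^ n := by
    rw [hDdef, ContinuousLinearMap.det, ContinuousLinearMap.coe_smul,
      ContinuousLinearMap.coe_id, LinearMap.det_smul, LinearMap.det_id,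
      finrank_euclideanSpace_fin, mul_one]
  have hCoV := lintegral_image_eq_lintegral_abs_det_fderiv_mul volume hAmeas hD hTinj
    (fun x => ENNReal.ofReal (f x))
  have hTim : T '' (S ∩ V ⁻¹' Set.Ioi (t * m)) =
      (fun y => a + l⁻¹ • (y - a)) ⁻¹' (S ∩ V ⁻¹' Set.Ioi (t * m)) := by
    ext y
    constructor
    · rintro ⟨x, hx, rfl⟩
      rw [hTdef]
      simp only [Set.mem_preimage]
      have he : a + l⁻¹ • (a + l • (x - a) - a) = x := by
        simp [smul_smul, inv_mul_cancel₀ hl0.ne']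
      rw [he]
      exact hx
    · intro hy
      refine ⟨a + l⁻¹ • (y - a), hy, ?_⟩
      rw [hTdef]
      simp [smul_smul, mul_inv_cancel₀ hl0.ne']
  have hTimOpen : IsOpen (T '' (S ∩ V ⁻¹' Set.Ioi (t * m))) := by
    rw [hTim]
    exact hAopen.preimage
      (continuous_const.add ((continuous_id.sub continuous_const).const_smul l⁻¹))
  have hstep : ENNReal.ofReal (l ^ n * s ^ (-β)) * μ (S ∩ V ⁻¹' Set.Ioi (t * m)) ≤ 1 := by
    have e1 : μ (S ∩ V ⁻¹' Set.Ioi (t * m)) =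
        ∫⁻ x in S ∩ V ⁻¹' Set.Ioi (t * m), ENNReal.ofReal (f x) := by
      rw [hμ, withDensity_apply _ hAmeas]
    calc ENNReal.ofReal (l ^ n * s ^ (-β)) * μ (S ∩ V ⁻¹' Set.Ioi (t * m))
        = ∫⁻ x in S ∩ V ⁻¹' Set.Ioi (t * m),
            ENNReal.ofReal (l ^ n * s ^ (-β)) * ENNReal.ofReal (f x) := by
          rw [e1, lintegral_const_mul _ hgmeas]
      _ ≤ ∫⁻ x in S ∩ V ⁻¹' Set.Ioi (t * m),
            ENNReal.ofReal |D.det| * ENNReal.ofReal (f (T x)) := by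
          apply setLIntegral_mono (measurable_const.mul (hgmeas.comp hTcont.measurable))
          intro x hx
          show ENNReal.ofReal (l ^ n * s ^ (-β)) * ENNReal.ofReal (f x) ≤
            ENNReal.ofReal |D.det| * ENNReal.ofReal (f (T x))
          rw [hdet, abs_of_pos (pow_pos hl0 n)]
          rw [← ENNReal.ofReal_mul (mul_nonneg (pow_nonneg hl0.le n) (Real.rpow_nonneg hspos.le _)),
            ← ENNReal.ofReal_mul (pow_nonneg hl0.le n)]
          apply ENNReal.ofReal_le_ofReal
          calc l ^ n * s ^ (-β) * f x = l ^ n * (s ^ (-β) * f x) := by ring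
            _ ≤ l ^ n * f (T x) :=
                mul_le_mul_of_nonneg_left (hkey x hx) (pow_nonneg hl0.le n)
      _ = ∫⁻ x in T '' (S ∩ V ⁻¹' Set.Ioi (t * m)), ENNReal.ofReal (f x) := hCoV.symm
      _ = μ (T '' (S ∩ V ⁻¹' Set.Ioi (t * m))) := by
          rw [hμ, withDensity_apply _ hTimOpen.measurableSet]
      _ ≤ μ Set.univ := measure_mono (Set.subset_univ _)
      _ = 1 := hμuniv
  have hμA : μ (S ∩ V ⁻¹' Set.Ioi (t * m)) ≤ 1/2 := by
    have hsβ : 0 < s ^ β := Real.rpow_pos_of_pos hspos β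
    have h1 : (2:ℝ) ≤ l ^ n * s ^ (-β) := by
      rw [show l ^ n = l ^ (n:ℝ) from (Real.rpow_natCast l n).symm,
        Real.rpow_neg hspos.le, ← div_eq_mul_inv, le_div_iff₀ hsβ]
      linarith [hls]
    have hC : (2:ℝ≥0∞) ≤ ENNReal.ofReal (l ^ n * s ^ (-β)) := by
      calc (2:ℝ≥0∞) = ENNReal.ofReal 2 := by norm_num
        _ ≤ ENNReal.ofReal (l ^ n * s ^ (-β)) := ENNReal.ofReal_le_ofReal h1
    have h2 : 2 * μ (S ∩ V ⁻¹' Set.Ioi (t * m)) ≤ 1 :=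
      le_trans (mul_le_mul_left hC _) hstep
    rw [ENNReal.le_div_iff_mul_le (Or.inl (by norm_num)) (Or.inl (by norm_num))]
    rw [mul_comm]
    exact h2
  have hAc : (1/2 : ℝ≥0∞) ≤ μ ((S ∩ V ⁻¹' Set.Ioi (t * m))ᶜ) := by
    rw [measure_compl hAmeas (measure_ne_top μ _), hμuniv]
    calc (1/2 : ℝ≥0∞) = 1 - 1/2 := (ENNReal.sub_half ENNReal.one_ne_top).symm
      _ ≤ 1 - μ (S ∩ V ⁻¹' Set.Ioi (t * m)) := tsub_le_tsub_left hμA 1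
  have hSc : μ Sᶜ = 0 := by
    rw [hμ, withDensity_apply _ hSmeas.compl]
    rw [setLIntegral_congr_fun hSmeas.compl
      (fun x hx => by rw [hfSc x hx, ENNReal.ofReal_zero])]
    simp
  have hc0n : Real.exp (-32 * β₀ / (β₀ - 1)) ^ n = t ^ (-β) := by
    rw [htdef, ← Real.exp_nat_mul, ← Real.exp_mul]
    congr 1
    rw [hαdef, hγdef]
    field_simp
  have hsubset : (S ∩ V ⁻¹' Set.Ioi (t * m))ᶜ ⊆
      {x | Real.exp (-32 * β₀ / (β₀ - 1)) ^ n * densSup f ≤ f x} ∪ Sᶜ := by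
    intro x hx
    by_cases hxS : x ∈ S
    · left
      have hxV : V x ≤ t * m := by
        by_contra hcon
        exact hx ⟨hxS, lt_of_not_ge hcon⟩
      show _ ≤ f x
      have h2 : (t * m) ^ (-β) ≤ V x ^ (-β) :=
        Real.rpow_le_rpow_of_nonpos (hVpos x hxS) hxV (by linarith)
      have h3 : (t * m) ^ (-β) = t ^ (-β) * m ^ (-β) := Real.mul_rpow htpos.le hm0
      calc Real.exp (-32 * β₀ / (β₀ - 1)) ^ n * densSup f
          ≤ t ^ (-β) * m ^ (-β) := by
            rw [hc0n]
            exact mul_le_mul_of_nonneg_left hM (Real.rpow_nonneg htpos.le _)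
        _ = (t * m) ^ (-β) := h3.symm
        _ ≤ V x ^ (-β) := h2
        _ = f x := (hfS x hxS).symm
    · right; exact hxS
  calc (1/2 : ℝ≥0∞) ≤ μ ((S ∩ V ⁻¹' Set.Ioi (t * m))ᶜ) := hAc
    _ ≤ μ ({x | Real.exp (-32 * β₀ / (β₀ - 1)) ^ n * densSup f ≤ f x} ∪ Sᶜ) :=
        measure_mono hsubset
    _ ≤ μ {x | Real.exp (-32 * β₀ / (β₀ - 1)) ^ n * densSup f ≤ f x} + μ Sᶜ :=
        measure_union_le _ _
    _ = μ {x | Real.exp (-32 * β₀ / (β₀ - 1)) ^ n * densSup f ≤ f x} := by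
        rw [hSc, add_zero]
end

section
/- Let μ be a probability measure on ℝⁿ with a log-concave density f. Then μ({x : f(x) ≥ e^{−8n}·‖f‖}) ≥ 1 − 5^{−n}. -/
open MeasureTheory ProbabilityTheory Real
open scoped Pointwise ENNReal

lemma numeric13 (n : ℕ) (hn : 1 ≤ n) :
    (2:ℝ) ^ n * Real.sqrt (2 * Real.exp (-(8 * n))) ≤ (1/5) ^ n := by
  have hsq : Real.sqrt (2 * Real.exp (-(8 * n))) = Real.sqrt 2 * Real.exp (-(4 * n)) := by
    rw [Real.sqrt_mul (by norm_num : (0:ℝ) ≤ 2)]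
    congr 1
    have h : (-(8 * n) : ℝ) = (2:ℕ) * (-(4 * n)) := by push_cast; ring
    rw [h, Real.exp_nat_mul, Real.sqrt_sq (Real.exp_nonneg _)]
  have e2 : (2:ℝ) ≤ Real.exp 1 := by
    have := Real.add_one_le_exp 1; linarith
  have e16 : (16:ℝ) ≤ Real.exp 4 := by
    have h4 : Real.exp 4 = Real.exp 1 ^ (4:ℕ) := by
      rw [← Real.exp_nat_mul]; norm_num
    have : (2:ℝ)^(4:ℕ) ≤ Real.exp 1 ^ (4:ℕ) := pow_le_pow_left₀ (by norm_num) e2 4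
    rw [h4]; norm_num at this ⊢; linarith
  have hexp : Real.exp (-(4 * n)) ≤ (1/16 : ℝ) ^ n := by
    have h1 : (16:ℝ) ^ n ≤ Real.exp (4 * n) := by
      calc (16:ℝ) ^ n ≤ (Real.exp 4) ^ n := pow_le_pow_left₀ (by norm_num) e16 n
        _ = Real.exp (n * 4) := (Real.exp_nat_mul 4 n).symm
        _ = Real.exp (4 * n) := by ring_nf
    rw [Real.exp_neg, one_div, inv_pow]
    exact inv_anti₀ (by positivity) h1
  have s2 : Real.sqrt 2 ≤ 8/5 := by
    rw [show (8/5:ℝ) = Real.sqrt ((8/5)^2) from (Real.sqrt_sq (by norm_num)).symm]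
    exact Real.sqrt_le_sqrt (by norm_num)
  calc (2:ℝ) ^ n * Real.sqrt (2 * Real.exp (-(8 * n)))
      = 2 ^ n * (Real.sqrt 2 * Real.exp (-(4 * n))) := by rw [hsq]
    _ ≤ 2 ^ n * ((8/5) * (1/16:ℝ) ^ n) := by gcongr
    _ = (8/5) * ((1/8:ℝ) ^ n) := by
        rw [show ((1/8:ℝ))^n = 2^n * (1/16:ℝ)^n from by rw [← mul_pow]; norm_num]
        ring
    _ ≤ (8/5) ^ n * ((1/8:ℝ) ^ n) :=
        mul_le_mul_of_nonneg_right (le_self_pow₀ (by norm_num) (by omega)) (by positivity)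
    _ = (1/5 : ℝ) ^ n := by rw [← mul_pow]; norm_num

lemma cov13 {n : ℕ} (x₀ : EuclideanSpace ℝ (Fin n)) (G : EuclideanSpace ℝ (Fin n) → ℝ≥0∞) :
    ∫⁻ x, G ((2:ℝ)⁻¹ • x + (2:ℝ)⁻¹ • x₀) = (2:ℝ≥0∞) ^ n * ∫⁻ x, G x := by
  set G' : EuclideanSpace ℝ (Fin n) → ℝ≥0∞ := fun z => G (z + (2:ℝ)⁻¹ • x₀) with hG'
  let e : EuclideanSpace ℝ (Fin n) ≃ᵐ EuclideanSpace ℝ (Fin n) :=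
    (Homeomorph.smulOfNeZero ((2:ℝ)⁻¹) (by norm_num)).toMeasurableEquiv
  have he : ⇑e = fun x : EuclideanSpace ℝ (Fin n) => (2:ℝ)⁻¹ • x := rfl
  have hmap : Measure.map e (volume : Measure (EuclideanSpace ℝ (Fin n)))
      = (2:ℝ≥0∞) ^ n • volume := by
    rw [he]
    rw [show (fun x : EuclideanSpace ℝ (Fin n) => (2:ℝ)⁻¹ • x) = ((2:ℝ)⁻¹ • ·) from rfl]
    rw [Measure.map_addHaar_smul volume (by norm_num : ((2:ℝ)⁻¹) ≠ 0)]
    congr 1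
    rw [finrank_euclideanSpace_fin]
    rw [show |(((2:ℝ)⁻¹) ^ n)⁻¹| = (2:ℝ)^n by rw [abs_of_nonneg (by positivity)]; simp]
    rw [ENNReal.ofReal_pow (by norm_num)]
    norm_num
  calc ∫⁻ x, G ((2:ℝ)⁻¹ • x + (2:ℝ)⁻¹ • x₀) = ∫⁻ x, G' (e x) := rfl
    _ = ∫⁻ y, G' y ∂(Measure.map e volume) := (lintegral_map_equiv G' e).symm
    _ = (2:ℝ≥0∞) ^ n * ∫⁻ y, G' y := by rw [hmap, lintegral_smul_measure, smul_eq_mul]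
    _ = (2:ℝ≥0∞) ^ n * ∫⁻ y, G y := congrArg _ (lintegral_add_right_eq_self G ((2:ℝ)⁻¹ • x₀))


/-- Effective support of log-concave measures (Proposition 5.1 with explicit constants):
μ{f ≥ e^(-8n)·‖f‖} ≥ 1 - 5^(-n). -/
theorem statement13 (n : ℕ)
    (μ : Measure (EuclideanSpace ℝ (Fin n))) [IsProbabilityMeasure μ]
    (f : EuclideanSpace ℝ (Fin n) → ℝ)
    (hμ : μ = volume.withDensity (fun x => ENNReal.ofReal (f x)))
    (hf : LogConcaveDensity f) :
    1 - (1 / 5 : ℝ≥0∞) ^ n ≤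
      μ {x | Real.exp (-(8 * n)) * densSup f ≤ f x} := by
  rcases Nat.eq_zero_or_pos n with hn | hn
  · subst hn
    rw [pow_zero, tsub_self]
    exact zero_le
  have hf0 := hf.1
  set M := densSup f with hMdef
  by_cases hM : M ≤ 0
  · have hu : {x | Real.exp (-(8 * n)) * M ≤ f x} = Set.univ := by
      ext x
      simp only [Set.mem_setOf_eq, Set.mem_univ, iff_true]
      exact le_trans (mul_nonpos_of_nonneg_of_nonpos (Real.exp_nonneg _) hM) (hf0 x)
    rw [hu, measure_univ]
    exact tsub_le_self
  push_neg at hM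
  -- total mass 1
  have htot : ∫⁻ x, ENNReal.ofReal (f x) = 1 := by
    have h1 : μ Set.univ = 1 := measure_univ
    rw [hμ, withDensity_apply _ MeasurableSet.univ, Measure.restrict_univ] at h1
    exact h1
  -- essSup equals ofReal M
  have hessne : essSup (fun x => ENNReal.ofReal (f x)) (volume : Measure (EuclideanSpace ℝ (Fin n))) ≠ ∞ := by
    intro h
    rw [hMdef, densSup, h, ENNReal.toReal_top] at hM
    exact lt_irrefl _ hM
  have hess : ENNReal.ofReal M = essSup (fun x => ENNReal.ofReal (f x)) volume := by
    rw [hMdef, densSup]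
    exact ENNReal.ofReal_toReal hessne
  -- find x₀ with f x₀ > M/2
  obtain ⟨x₀, hx₀⟩ : ∃ x₀, M / 2 < f x₀ := by
    by_contra hcon
    push_neg at hcon
    have hle : essSup (fun x => ENNReal.ofReal (f x)) (volume : Measure (EuclideanSpace ℝ (Fin n)))
        ≤ ENNReal.ofReal (M/2) :=
      essSup_le_of_ae_le _ (Filter.Eventually.of_forall fun x => ENNReal.ofReal_le_ofReal (hcon x))
    rw [← hess] at hle
    have := (ENNReal.ofReal_le_ofReal_iff (by linarith)).mp hle
    linarith
  have hx₀pos : 0 < f x₀ := lt_trans (by linarith) hx₀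
  set rM := Real.exp (-(8 * n)) * M with hrMdef
  have hrM : 0 < rM := mul_pos (Real.exp_pos _) hM
  -- key inequality: sqrt(f x₀) * ∫ sqrt f ≤ 2^n
  have hkey : ENNReal.ofReal (Real.sqrt (f x₀)) * ∫⁻ x, ENNReal.ofReal (Real.sqrt (f x))
      ≤ (2:ℝ≥0∞) ^ n := by
    rw [← lintegral_const_mul' _ _ ENNReal.ofReal_ne_top]
    calc ∫⁻ x, ENNReal.ofReal (Real.sqrt (f x₀)) * ENNReal.ofReal (Real.sqrt (f x))
        ≤ ∫⁻ x, ENNReal.ofReal (f ((2:ℝ)⁻¹ • x + (2:ℝ)⁻¹ • x₀)) := by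
          refine lintegral_mono fun x => ?_
          rw [← ENNReal.ofReal_mul (Real.sqrt_nonneg _)]
          refine ENNReal.ofReal_le_ofReal ?_
          have h2 := hf.2 x x₀ (2⁻¹) (by norm_num) (by norm_num)
          norm_num at h2
          rw [Real.sqrt_eq_rpow, Real.sqrt_eq_rpow]
          calc f x₀ ^ (1/2:ℝ) * f x ^ (1/2:ℝ) = f x ^ (1/2:ℝ) * f x₀ ^ (1/2:ℝ) := by ring
            _ ≤ f ((1/2:ℝ) • x + (1/2:ℝ) • x₀) := h2
            _ = f ((2:ℝ)⁻¹ • x + (2:ℝ)⁻¹ • x₀) := by norm_num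
      _ = (2:ℝ≥0∞) ^ n * ∫⁻ x, ENNReal.ofReal (f x) :=
          cov13 x₀ (fun y => ENNReal.ofReal (f y))
      _ = (2:ℝ≥0∞) ^ n := by rw [htot, mul_one]
  -- convexity of good set
  have hconv : Convex ℝ {x | rM ≤ f x} := by
    intro x hx y hy a b ha hb hab
    simp only [Set.mem_setOf_eq] at hx hy ⊢
    rcases eq_or_lt_of_le ha with ha0 | ha0
    · have hb1 : b = 1 := by linarith
      rw [← ha0, hb1, zero_smul, one_smul, zero_add]; exact hy
    rcases eq_or_lt_of_le hb with hb0 | hb0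
    · have ha1 : a = 1 := by linarith
      rw [← hb0, ha1, zero_smul, one_smul, add_zero]; exact hx
    have ha1 : a < 1 := by linarith
    have hb1 : b = 1 - a := by linarith
    rw [hb1]
    have h2 := hf.2 x y a ha0 ha1
    refine le_trans ?_ h2
    have h3 : rM ^ (a:ℝ) * rM ^ (1 - a:ℝ) = rM := by
      rw [← Real.rpow_add hrM]; norm_num
    rw [← h3]
    exact mul_le_mul (Real.rpow_le_rpow hrM.le hx ha)
      (Real.rpow_le_rpow hrM.le hy (by linarith))
      (Real.rpow_nonneg hrM.le _) (Real.rpow_nonneg (hf0 x) _)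
  -- bad set: null measurable
  have hbadnm : NullMeasurableSet {x | rM ≤ f x}ᶜ
      (volume : Measure (EuclideanSpace ℝ (Fin n))) :=
    (hconv.nullMeasurableSet _).compl
  obtain ⟨B, hBsub, hBm, hBae⟩ := hbadnm.exists_measurable_subset_ae_eq
  have hac : μ ≪ volume := by
    rw [hμ]; exact withDensity_absolutelyContinuous _ _
  have hμeq : μ B = μ {x | rM ≤ f x}ᶜ := measure_congr (hBae.filter_mono hac.ae_le)
  -- bound μ B
  have hBbound : μ B ≤ ENNReal.ofReal (Real.sqrt rM) * ∫⁻ x, ENNReal.ofReal (Real.sqrt (f x)) := by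
    rw [hμ, withDensity_apply _ hBm]
    calc ∫⁻ x in B, ENNReal.ofReal (f x)
        ≤ ∫⁻ x in B, ENNReal.ofReal (Real.sqrt rM) * ENNReal.ofReal (Real.sqrt (f x)) := by
          refine lintegral_mono_ae ((ae_restrict_iff' hBm).mpr
            (Filter.Eventually.of_forall fun x hx => ?_))
          have hxb : f x < rM := not_le.mp (hBsub hx)
          rw [← ENNReal.ofReal_mul (Real.sqrt_nonneg _)]
          refine ENNReal.ofReal_le_ofReal ?_
          calc f x = Real.sqrt (f x) * Real.sqrt (f x) := (Real.mul_self_sqrt (hf0 x)).symm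
            _ ≤ Real.sqrt rM * Real.sqrt (f x) :=
              mul_le_mul_of_nonneg_right (Real.sqrt_le_sqrt hxb.le) (Real.sqrt_nonneg _)
      _ ≤ ∫⁻ x, ENNReal.ofReal (Real.sqrt rM) * ENNReal.ofReal (Real.sqrt (f x)) :=
          setLIntegral_le_lintegral _ _
      _ = _ := lintegral_const_mul' _ _ ENNReal.ofReal_ne_top
  -- I ≤ 2^n / ofReal (sqrt (f x₀))
  have hI : ∫⁻ x, ENNReal.ofReal (Real.sqrt (f x))
      ≤ (2:ℝ≥0∞) ^ n / ENNReal.ofReal (Real.sqrt (f x₀)) := by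
    rw [ENNReal.le_div_iff_mul_le
      (Or.inl (by simpa [ENNReal.ofReal_pos] using Real.sqrt_pos.mpr hx₀pos : ENNReal.ofReal (Real.sqrt (f x₀)) ≠ 0))
      (Or.inl ENNReal.ofReal_ne_top)]
    rw [mul_comm]
    exact hkey
  -- final bound on μ of bad set
  have hbadfinal : μ {x | rM ≤ f x}ᶜ ≤ (1/5 : ℝ≥0∞) ^ n := by
    rw [← hμeq]
    calc μ B ≤ ENNReal.ofReal (Real.sqrt rM) * ∫⁻ x, ENNReal.ofReal (Real.sqrt (f x)) := hBbound
      _ ≤ ENNReal.ofReal (Real.sqrt rM) *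
          ((2:ℝ≥0∞) ^ n / ENNReal.ofReal (Real.sqrt (f x₀))) := by
          exact mul_le_mul_right hI _
      _ = (2:ℝ≥0∞) ^ n *
          (ENNReal.ofReal (Real.sqrt rM) / ENNReal.ofReal (Real.sqrt (f x₀))) := by
          rw [div_eq_mul_inv, div_eq_mul_inv]; ring
      _ = (2:ℝ≥0∞) ^ n * ENNReal.ofReal (Real.sqrt rM / Real.sqrt (f x₀)) := by
          rw [ENNReal.ofReal_div_of_pos (Real.sqrt_pos.mpr hx₀pos)]
      _ = (2:ℝ≥0∞) ^ n * ENNReal.ofReal (Real.sqrt (rM / f x₀)) := by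
          rw [Real.sqrt_div hrM.le]
      _ ≤ (2:ℝ≥0∞) ^ n * ENNReal.ofReal (Real.sqrt (2 * Real.exp (-(8 * n)))) := by
          refine mul_le_mul_right (ENNReal.ofReal_le_ofReal (Real.sqrt_le_sqrt ?_)) _
          have h5 : rM / f x₀ ≤ rM / (M / 2) :=
            div_le_div_of_nonneg_left hrM.le (by linarith) hx₀.le
          have h6 : rM / (M / 2) = 2 * Real.exp (-(8 * n)) := by
            rw [hrMdef]; field_simp
          linarith [h5, h6 ▸ h5]
      _ ≤ (1/5 : ℝ≥0∞) ^ n := by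
          rw [show (2:ℝ≥0∞)^n = ENNReal.ofReal ((2:ℝ)^n) by
            rw [ENNReal.ofReal_pow (by norm_num)]; norm_num]
          rw [← ENNReal.ofReal_mul (by positivity)]
          rw [show (1/5:ℝ≥0∞)^n = ENNReal.ofReal ((1/5:ℝ)^n) by
            rw [ENNReal.ofReal_pow (by norm_num), ENNReal.ofReal_div_of_pos (by norm_num)]
            norm_num]
          exact ENNReal.ofReal_le_ofReal (numeric13 n hn)
  -- conclude
  have hsplit : (1:ℝ≥0∞) ≤ μ {x | rM ≤ f x} + μ {x | rM ≤ f x}ᶜ := by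
    calc (1:ℝ≥0∞) = μ ({x | rM ≤ f x} ∪ {x | rM ≤ f x}ᶜ) := by
          rw [Set.union_compl_self, measure_univ]
      _ ≤ μ {x | rM ≤ f x} + μ {x | rM ≤ f x}ᶜ := measure_union_le _ _
  rw [tsub_le_iff_right]
  calc (1:ℝ≥0∞) ≤ μ {x | rM ≤ f x} + μ {x | rM ≤ f x}ᶜ := hsplit
    _ ≤ μ {x | rM ≤ f x} + (1/5 : ℝ≥0∞) ^ n := add_le_add_right hbadfinal _
end

section
/- For any convex bodies A, B, D in ℝⁿ, |A + B|^{1/n} · |D|^{1/n} ≤ 2 · |A + D|^{1/n} · |B + D|^{1/n}. -/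
open MeasureTheory ProbabilityTheory Real
open scoped Pointwise ENNReal

/-- Ruzsa triangle inequality for volumes: `|U - W| * |V| ≤ |U + V| * |V + W|`. -/
lemma ruzsa_vol {n : ℕ} (U V W : Set (EuclideanSpace ℝ (Fin n)))
    (hU : IsCompact U) (hV : IsCompact V) (hW : IsCompact W) :
    volume (U - W) * volume V ≤ volume (U + V) * volume (V + W) := by
  have hS : IsCompact (U + V) := hU.add hV
  have hT : IsCompact (V + W) := hV.add hW
  have hSm : MeasurableSet (U + V) := hS.isClosed.measurableSet
  have hTm : MeasurableSet (V + W) := hT.isClosed.measurableSet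
  have hVm : MeasurableSet V := hV.isClosed.measurableSet
  have hUW : IsCompact (U - W) := by
    rw [sub_eq_add_neg]; exact hU.add hW.neg
  have hUWm : MeasurableSet (U - W) := hUW.isClosed.measurableSet
  set f : EuclideanSpace ℝ (Fin n) → ℝ≥0∞ := (U + V).indicator 1 with hfdef
  set g : EuclideanSpace ℝ (Fin n) → ℝ≥0∞ := (V + W).indicator 1 with hgdef
  have hf : Measurable f := measurable_one.indicator hSm
  have hg : Measurable g := measurable_one.indicator hTm
  have key : ∫⁻ t, ∫⁻ x, f x * g (x - t) = volume (U + V) * volume (V + W) := by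
    rw [lintegral_lintegral_swap]
    · have h1 : ∀ x, ∫⁻ t, f x * g (x - t) = f x * volume (V + W) := by
        intro x
        have hm : Measurable fun t => g (x - t) :=
          hg.comp (measurable_const.sub measurable_id)
        rw [lintegral_const_mul _ hm]
        congr 1
        rw [(Measure.measurePreserving_sub_left volume x).lintegral_comp hg]
        exact lintegral_indicator_one hTm
      simp_rw [h1]
      rw [lintegral_mul_const _ hf, lintegral_indicator_one hSm]
    · exact ((hf.comp measurable_snd).mul
        (hg.comp (measurable_snd.sub measurable_fst))).aemeasurable
  have lower : ∀ t ∈ U - W, volume V ≤ ∫⁻ x, f x * g (x - t) := by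
    intro t ht
    obtain ⟨u, hu, w, hw, huw⟩ := ht
    calc volume V = volume (u +ᵥ V) := (measure_vadd volume u V).symm
      _ = ∫⁻ x, (u +ᵥ V).indicator 1 x :=
          (lintegral_indicator_one (hVm.const_vadd u)).symm
      _ ≤ ∫⁻ x, f x * g (x - t) := by
          refine lintegral_mono fun x => ?_
          by_cases hx : x ∈ u +ᵥ V
          · obtain ⟨v, hv, rfl⟩ := hx
            have hmem : u + v ∈ u +ᵥ V := ⟨v, hv, rfl⟩
            have hxS : u + v ∈ U + V := Set.add_mem_add hu hv
            have hxT : (u + v) - t ∈ V + W := by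
              have he : (u + v) - t = v + w := by rw [← huw]; show u + v - (u - w) = v + w; abel
              rw [he]; exact Set.add_mem_add hv hw
            have : (u + v : EuclideanSpace ℝ (Fin n)) = u +ᵥ v := rfl
            simp [hfdef, hgdef, Set.indicator_of_mem, hxS, hxT, hmem]
          · simp [Set.indicator_of_notMem hx]
  calc volume (U - W) * volume V
      = ∫⁻ t, (U - W).indicator (fun _ => volume V) t := by
        rw [lintegral_indicator hUWm, setLIntegral_const, mul_comm]
    _ ≤ ∫⁻ t, ∫⁻ x, f x * g (x - t) := by
        refine lintegral_mono fun t => ?_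
        by_cases ht : t ∈ U - W
        · rw [Set.indicator_of_mem ht]; exact lower t ht
        · rw [Set.indicator_of_notMem ht]; exact zero_le
    _ = volume (U + V) * volume (V + W) := key

/-- `|A+B|·|D| ≤ 2^n·|A+D|·|B+D|` in `ℝ≥0∞`. -/
lemma submod_vol {n : ℕ} (A B D : Set (EuclideanSpace ℝ (Fin n)))
    (hAk : IsCompact A) (hBk : IsCompact B) (hDk : IsCompact D)
    (hDc : Convex ℝ D) (hDi : (interior D).Nonempty) :
    volume (A + B) * volume D ≤
      ENNReal.ofReal (2 ^ n) * (volume (A + D) * volume (B + D)) := by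
  have h1 : volume (A + B) * volume D ≤ volume (A + D) * volume (D - B) := by
    have := ruzsa_vol A D (-B) hAk hDk hBk.neg
    rwa [sub_neg_eq_add, ← sub_eq_add_neg] at this
  have h2 : volume (D - B) * volume D ≤ volume (D + D) * volume (D + B) :=
    ruzsa_vol D D B hDk hDk hBk
  have hDD : volume (D + D) = ENNReal.ofReal (2 ^ n) * volume D := by
    have e : D + D = (2 : ℝ) • D := by
      have h := hDc.add_smul (by norm_num : (0:ℝ) ≤ 1) (by norm_num : (0:ℝ) ≤ 1)
      norm_num [one_smul] at h
      rw [h]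
    rw [e, Measure.addHaar_smul_of_nonneg volume (by norm_num : (0:ℝ) ≤ 2),
      finrank_euclideanSpace_fin]
  have hDpos : volume D ≠ 0 :=
    (Measure.measure_pos_of_nonempty_interior volume hDi).ne'
  have hDfin : volume D ≠ ∞ := hDk.measure_lt_top.ne
  have h3 : volume (D - B) ≤ ENNReal.ofReal (2 ^ n) * volume (D + B) := by
    rw [← ENNReal.mul_le_mul_iff_left hDpos hDfin]
    calc volume (D - B) * volume D ≤ volume (D + D) * volume (D + B) := h2
      _ = ENNReal.ofReal (2 ^ n) * volume (D + B) * volume D := by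
          rw [hDD]; ring
  calc volume (A + B) * volume D ≤ volume (A + D) * volume (D - B) := h1
    _ ≤ volume (A + D) * (ENNReal.ofReal (2 ^ n) * volume (D + B)) :=
        mul_le_mul_right h3 _
    _ = ENNReal.ofReal (2 ^ n) * (volume (A + D) * volume (B + D)) := by
        rw [add_comm D B]; ring

/-- Volume submodularity for convex bodies (inequality (6.2)):
|A+B|^(1/n)·|D|^(1/n) ≤ 2·|A+D|^(1/n)·|B+D|^(1/n). -/
theorem statement17 (n : ℕ) (hn : 1 ≤ n)
    (A B D : Set (EuclideanSpace ℝ (Fin n)))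
    (hA : IsConvexBody A) (hB : IsConvexBody B) (hD : IsConvexBody D) :
    (volume (A + B)).toReal ^ ((1 : ℝ) / n) * (volume D).toReal ^ ((1 : ℝ) / n) ≤
      2 * ((volume (A + D)).toReal ^ ((1 : ℝ) / n) *
        (volume (B + D)).toReal ^ ((1 : ℝ) / n)) := by
  obtain ⟨hAc, hAk, hAi⟩ := hA
  obtain ⟨hBc, hBk, hBi⟩ := hB
  obtain ⟨hDc, hDk, hDi⟩ := hD
  have key := submod_vol A B D hAk hBk hDk hDc hDi
  set x := (volume (A + B)).toReal with hx
  set q := (volume D).toReal with hq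
  set u := (volume (A + D)).toReal with hu
  set v := (volume (B + D)).toReal with hv
  have hfinAB : volume (A + B) ≠ ∞ := (hAk.add hBk).measure_lt_top.ne
  have hfinAD : volume (A + D) ≠ ∞ := (hAk.add hDk).measure_lt_top.ne
  have hfinBD : volume (B + D) ≠ ∞ := (hBk.add hDk).measure_lt_top.ne
  have hfinD : volume D ≠ ∞ := hDk.measure_lt_top.ne
  have hRfin : ENNReal.ofReal ((2:ℝ) ^ n) * (volume (A + D) * volume (B + D)) ≠ ∞ :=
    ENNReal.mul_ne_top ENNReal.ofReal_ne_top (ENNReal.mul_ne_top hfinAD hfinBD)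
  have hreal : x * q ≤ 2 ^ n * (u * v) := by
    have := ENNReal.toReal_mono hRfin key
    rwa [ENNReal.toReal_mul, ENNReal.toReal_mul, ENNReal.toReal_mul,
      ENNReal.toReal_ofReal (by positivity)] at this
  have hxn : 0 ≤ x := ENNReal.toReal_nonneg
  have hqn : 0 ≤ q := ENNReal.toReal_nonneg
  have hun : 0 ≤ u := ENNReal.toReal_nonneg
  have hvn : 0 ≤ v := ENNReal.toReal_nonneg
  have hn0 : (n : ℝ) ≠ 0 := Nat.cast_ne_zero.mpr (by omega)
  calc x ^ ((1:ℝ)/n) * q ^ ((1:ℝ)/n)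
      = (x * q) ^ ((1:ℝ)/n) := (Real.mul_rpow hxn hqn).symm
    _ ≤ (2 ^ n * (u * v)) ^ ((1:ℝ)/n) :=
        Real.rpow_le_rpow (mul_nonneg hxn hqn) hreal (by positivity)
    _ = ((2:ℝ) ^ n) ^ ((1:ℝ)/n) * (u * v) ^ ((1:ℝ)/n) :=
        Real.mul_rpow (by positivity) (mul_nonneg hun hvn)
    _ = 2 * (u ^ ((1:ℝ)/n) * v ^ ((1:ℝ)/n)) := by
        rw [Real.mul_rpow hun hvn, ← Real.rpow_natCast (2:ℝ) n,
          ← Real.rpow_mul (by norm_num : (0:ℝ) ≤ 2),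
          mul_one_div_cancel hn0, Real.rpow_one]
end

section
/- For any log-concave probability density f on ℝⁿ, 2^{−n}·‖f‖ ≤ ∫_{ℝⁿ} f(x)² dx ≤ ‖f‖. -/
open MeasureTheory ProbabilityTheory Real
open scoped Pointwise ENNReal

lemma cov_half {n : ℕ} (c : EuclideanSpace ℝ (Fin n)) (g : EuclideanSpace ℝ (Fin n) → ℝ≥0∞) :
    ∫⁻ y, g (c + (2:ℝ)⁻¹ • y) = (2:ℝ≥0∞) ^ n * ∫⁻ u, g u := by
  have h2 : ((2:ℝ)⁻¹) ≠ 0 := by norm_num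
  have hdet : ENNReal.ofReal |(((2:ℝ)⁻¹) ^ Module.finrank ℝ (EuclideanSpace ℝ (Fin n)))⁻¹|
      = (2:ℝ≥0∞) ^ n := by
    rw [finrank_euclideanSpace_fin, abs_of_nonneg (by positivity), ← inv_pow, inv_inv,
      ENNReal.ofReal_pow (by norm_num)]
    norm_num
  have htrans : ∀ G : EuclideanSpace ℝ (Fin n) → ℝ≥0∞, ∫⁻ y, G (c + y) = ∫⁻ u, G u := by
    intro G
    have h1 : ∫⁻ y, G (c + y) =
        ∫⁻ u, G u ∂(Measure.map (Homeomorph.addLeft c).toMeasurableEquiv volume) := by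
      rw [lintegral_map_equiv G (Homeomorph.addLeft c).toMeasurableEquiv]; rfl
    rw [h1, show ⇑(Homeomorph.addLeft c).toMeasurableEquiv
        = (c + · : EuclideanSpace ℝ (Fin n) → _) from rfl,
      MeasureTheory.map_add_left_eq_self volume c]
  have hscale : ∀ G : EuclideanSpace ℝ (Fin n) → ℝ≥0∞,
      ∫⁻ y, G ((2:ℝ)⁻¹ • y) = (2:ℝ≥0∞) ^ n * ∫⁻ u, G u := by
    intro G
    have h1 : ∫⁻ y, G ((2:ℝ)⁻¹ • y) =
        ∫⁻ u, G u ∂(Measure.map (Homeomorph.smulOfNeZero ((2:ℝ)⁻¹) h2).toMeasurableEquiv volume) := by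
      rw [lintegral_map_equiv G (Homeomorph.smulOfNeZero ((2:ℝ)⁻¹) h2).toMeasurableEquiv]; rfl
    rw [h1, show ⇑(Homeomorph.smulOfNeZero ((2:ℝ)⁻¹) h2).toMeasurableEquiv
        = (((2:ℝ)⁻¹) • · : EuclideanSpace ℝ (Fin n) → _) from rfl,
      Measure.map_addHaar_smul volume h2, hdet, lintegral_smul_measure, smul_eq_mul]
  calc ∫⁻ y, g (c + (2:ℝ)⁻¹ • y) = (2:ℝ≥0∞) ^ n * ∫⁻ u, g (c + u) := hscale (fun u => g (c + u))
    _ = (2:ℝ≥0∞) ^ n * ∫⁻ u, g u := by rw [htrans (fun u => g u)]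


/-- For a log-concave probability density (Lemma 8.1): 2^(-n)·‖f‖ ≤ ∫ f² ≤ ‖f‖. -/
theorem statement19 (n : ℕ) (f : EuclideanSpace ℝ (Fin n) → ℝ)
    (hf : LogConcaveDensity f) (hint : ∫ x, f x = 1) :
    (2 : ℝ) ^ (-(n : ℝ)) * densSup f ≤ ∫ x, (f x) ^ 2 ∧
      ∫ x, (f x) ^ 2 ≤ densSup f := by
  have hf0 : ∀ x, 0 ≤ f x := hf.1
  have hfint : Integrable f := by
    by_contra h
    rw [integral_undef h] at hint; norm_num at hint
  set F : EuclideanSpace ℝ (Fin n) → ℝ≥0∞ := fun x => ENNReal.ofReal (f x) with hFdef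
  have hds : densSup f = (essSup F volume).toReal := rfl
  have hF1 : ∫⁻ x, F x = 1 := by
    rw [← ofReal_integral_eq_lintegral_ofReal hfint (Filter.Eventually.of_forall hf0), hint,
      ENNReal.ofReal_one]
  set L : ℝ≥0∞ := ∫⁻ x, (F x) ^ 2 with hLdef
  -- key pointwise bound: f x₀ ≤ 2^n * L
  have key : ∀ x₀, F x₀ ≤ (2:ℝ≥0∞) ^ n * L := by
    intro x₀
    have hFne : F x₀ ≠ ⊤ := ENNReal.ofReal_ne_top
    have hpt : ∀ y, F x₀ * F y ≤ (F ((2:ℝ)⁻¹ • x₀ + (2:ℝ)⁻¹ • y)) ^ 2 := by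
      intro y
      have hlc := hf.2 x₀ y (2⁻¹) (by norm_num) (by norm_num)
      rw [show (1 - 2⁻¹ : ℝ) = 2⁻¹ by norm_num] at hlc
      have hreal : f x₀ * f y ≤ (f ((2:ℝ)⁻¹ • x₀ + (2:ℝ)⁻¹ • y)) ^ 2 := by
        have hsq : (f x₀ ^ (2⁻¹:ℝ) * f y ^ (2⁻¹:ℝ)) ^ 2 = f x₀ * f y := by
          rw [mul_pow, ← Real.rpow_natCast (f x₀ ^ (2⁻¹:ℝ)) 2,
            ← Real.rpow_natCast (f y ^ (2⁻¹:ℝ)) 2, ← Real.rpow_mul (hf0 x₀),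
            ← Real.rpow_mul (hf0 y)]
          norm_num
        calc f x₀ * f y = (f x₀ ^ (2⁻¹:ℝ) * f y ^ (2⁻¹:ℝ)) ^ 2 := hsq.symm
          _ ≤ (f ((2:ℝ)⁻¹ • x₀ + (2:ℝ)⁻¹ • y)) ^ 2 := by
              apply pow_le_pow_left₀ (mul_nonneg (Real.rpow_nonneg (hf0 x₀) _) (Real.rpow_nonneg (hf0 y) _)) hlc
      calc F x₀ * F y = ENNReal.ofReal (f x₀ * f y) := (ENNReal.ofReal_mul (hf0 x₀)).symm
        _ ≤ ENNReal.ofReal ((f ((2:ℝ)⁻¹ • x₀ + (2:ℝ)⁻¹ • y)) ^ 2) :=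
            ENNReal.ofReal_le_ofReal hreal
        _ = (F ((2:ℝ)⁻¹ • x₀ + (2:ℝ)⁻¹ • y)) ^ 2 := ENNReal.ofReal_pow (hf0 _) 2
    calc F x₀ = F x₀ * ∫⁻ y, F y := by rw [hF1, mul_one]
      _ = ∫⁻ y, F x₀ * F y := (lintegral_const_mul' _ _ hFne).symm
      _ ≤ ∫⁻ y, (F ((2:ℝ)⁻¹ • x₀ + (2:ℝ)⁻¹ • y)) ^ 2 := lintegral_mono hpt
      _ = (2:ℝ≥0∞) ^ n * L := cov_half ((2:ℝ)⁻¹ • x₀) (fun u => (F u) ^ 2)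
  have hsq_nonneg : ∀ x, (0:ℝ) ≤ f x ^ 2 := fun x => sq_nonneg _
  by_cases hLtop : L = ⊤
  · -- degenerate case: essSup infinite, f² not integrable
    have hM : essSup F volume = ⊤ := by
      by_contra hM
      have hb : L ≤ essSup F volume * 1 := by
        rw [← hF1, ← lintegral_const_mul' _ _ hM]
        refine lintegral_mono_ae ?_
        filter_upwards [ae_le_essSup (f := F)] with x hx
        calc (F x) ^ 2 = F x * F x := sq (F x)
          _ ≤ essSup F volume * F x := mul_le_mul_left hx _
      rw [hLtop, mul_one, top_le_iff] at hb
      exact hM hb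
    have hds0 : densSup f = 0 := by rw [hds, hM, ENNReal.toReal_top]
    have hnint : ¬ Integrable (fun x => f x ^ 2) := by
      intro h
      have hfin := (hasFiniteIntegral_iff_ofReal
        (Filter.Eventually.of_forall hsq_nonneg)).1 h.2
      have : (∫⁻ x, ENNReal.ofReal (f x ^ 2)) = L := by
        rw [hLdef]
        exact lintegral_congr fun x => ENNReal.ofReal_pow (hf0 x) 2
      rw [this, hLtop] at hfin
      exact absurd hfin (lt_irrefl _)
    rw [integral_undef hnint, hds0]
    norm_num
  · -- main case
    have h2n : ((2:ℝ≥0∞) ^ n * L) ≠ ⊤ :=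
      ENNReal.mul_ne_top (by simp) hLtop
    have hM_le : essSup F volume ≤ (2:ℝ≥0∞) ^ n * L :=
      essSup_le_of_ae_le _ (Filter.Eventually.of_forall key)
    have hM_ne : essSup F volume ≠ ⊤ := ne_top_of_le_ne_top h2n hM_le
    set B : ℝ := ((2:ℝ≥0∞) ^ n * L).toReal with hBdef
    have hfB : ∀ x, f x ≤ B := by
      intro x
      calc f x = (F x).toReal := (ENNReal.toReal_ofReal (hf0 x)).symm
        _ ≤ B := ENNReal.toReal_mono h2n (key x)
    have hsm : AEStronglyMeasurable (fun x => f x ^ 2) volume :=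
      hfint.aestronglyMeasurable.pow 2
    have hsqint : Integrable (fun x => f x ^ 2) := by
      refine Integrable.mono' (hfint.const_mul B) hsm (Filter.Eventually.of_forall fun x => ?_)
      rw [Real.norm_eq_abs, abs_of_nonneg (hsq_nonneg x)]
      calc f x ^ 2 = f x * f x := sq (f x)
        _ ≤ B * f x := mul_le_mul_of_nonneg_right (hfB x) (hf0 x)
    have hI : ∫ x, f x ^ 2 = L.toReal := by
      rw [integral_eq_lintegral_of_nonneg_ae (Filter.Eventually.of_forall hsq_nonneg) hsm]
      congr 1
      rw [hLdef]
      exact lintegral_congr fun x => ENNReal.ofReal_pow (hf0 x) 2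
    have hupper : L ≤ essSup F volume := by
      have hb : L ≤ essSup F volume * 1 := by
        rw [← hF1, ← lintegral_const_mul' _ _ hM_ne]
        refine lintegral_mono_ae ?_
        filter_upwards [ae_le_essSup (f := F)] with x hx
        calc (F x) ^ 2 = F x * F x := sq (F x)
          _ ≤ essSup F volume * F x := mul_le_mul_left hx _
      rwa [mul_one] at hb
    constructor
    · -- lower bound
      have h1 : densSup f ≤ 2 ^ n * L.toReal := by
        rw [hds]
        have := ENNReal.toReal_mono h2n hM_le
        rwa [ENNReal.toReal_mul, ENNReal.toReal_pow, ENNReal.toReal_ofNat] at this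
      have h2 : (2:ℝ) ^ (-(n:ℝ)) = ((2:ℝ) ^ n)⁻¹ := by
        rw [Real.rpow_neg (by norm_num), Real.rpow_natCast]
      rw [hI, h2]
      calc ((2:ℝ) ^ n)⁻¹ * densSup f ≤ ((2:ℝ) ^ n)⁻¹ * (2 ^ n * L.toReal) := by
            apply mul_le_mul_of_nonneg_left h1 (by positivity)
        _ = L.toReal := by field_simp
    · rw [hI, hds]
      exact ENNReal.toReal_mono hM_ne hupper
end
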